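/- arXiv:0710.3842 — 3 statements merged into one kernel-verified Lean document; each statement's English description precedes it below -/
import Mathlib

section
/- Let 0 < ε < 1 and α = 2 + ε. There exists a constant D > 0 (depending only on ε) such that for every integer m ≥ 0 and every k ∈ ℤ³ \ {0}: Σ_{l ∈ ℤ³, l ≠ 0, l ≠ k} exp(−2m‖l − k/2‖²) / (‖k − l‖^α ‖l‖^α) ≤ D ‖k‖^{−(1 + 2ε)}. -/
noncomputable section

open Real

abbrev Z3 : Type := Fin 3 → ℤ

/-- The integer vector `k` regarded as a vector in `ℝ³`. -/
def toR3 (k : Z3) : EuclideanSpace ℝ (Fin 3) := WithLp.toLp 2 (fun i => (k i : ℝ))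

/-- The Euclidean norm of `k ∈ ℤ³`. -/
def znorm (k : Z3) : ℝ := ‖toR3 k‖

namespace Aux

lemma toR3_sub (a b : Z3) : toR3 (a - b) = toR3 a - toR3 b := by
  ext i
  show ((a i - b i : ℤ) : ℝ) = (a i : ℝ) - (b i : ℝ)
  push_cast
  ring

lemma znorm_nonneg (l : Z3) : 0 ≤ znorm l := norm_nonneg _

lemma znorm_triangle (k l : Z3) : znorm k ≤ znorm l + znorm (k - l) := by
  have : toR3 k = toR3 l + (toR3 k - toR3 l) := by abel
  rw [znorm, this, znorm, znorm, toR3_sub]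
  exact norm_add_le _ _

/-- sup-norm of an integer vector -/
def ninf (l : Z3) : ℕ := Finset.univ.sup fun i => (l i).natAbs

lemma ninf_eq_zero {l : Z3} : ninf l = 0 ↔ l = 0 := by
  constructor
  · intro h
    funext i
    have : (l i).natAbs ≤ 0 := h ▸ Finset.le_sup (f := fun i => (l i).natAbs) (Finset.mem_univ i)
    simpa [Int.natAbs_eq_zero] using Nat.le_zero.mp this
  · intro h; subst h; simp [ninf]

lemma coord_le_ninf (l : Z3) (i : Fin 3) : (l i).natAbs ≤ ninf l :=
  Finset.le_sup (f := fun i => (l i).natAbs) (Finset.mem_univ i)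

lemma ninf_le_znorm (l : Z3) : (ninf l : ℝ) ≤ znorm l := by
  obtain ⟨i, hi⟩ := Finset.exists_mem_eq_sup Finset.univ Finset.univ_nonempty
    (fun i => (l i).natAbs)
  have h1 : (ninf l : ℝ) = |(l i : ℝ)| := by
    rw [ninf, hi.2]
    push_cast [Nat.cast_natAbs]
    norm_num
  rw [h1, znorm]
  have h2 : |(l i : ℝ)| = |toR3 l i| := rfl
  rw [h2, ← Real.sqrt_sq_eq_abs]
  rw [EuclideanSpace.norm_eq]
  apply Real.sqrt_le_sqrt
  have := Finset.single_le_sum (f := fun j => toR3 l j ^ 2) (fun j _ => sq_nonneg _)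
    (Finset.mem_univ i)
  simpa using this

lemma znorm_le_two_ninf (l : Z3) : znorm l ≤ 2 * ninf l := by
  rw [znorm, EuclideanSpace.norm_eq]
  have h : ∀ i : Fin 3, toR3 l i ^ 2 ≤ (ninf l : ℝ) ^ 2 := by
    intro i
    have h1 : |toR3 l i| ≤ (ninf l : ℝ) := by
      have := coord_le_ninf l i
      have : ((l i).natAbs : ℝ) ≤ (ninf l : ℝ) := by exact_mod_cast this
      calc |toR3 l i| = ((l i).natAbs : ℝ) := by
            show |(l i : ℝ)| = _
            push_cast [Nat.cast_natAbs]
            norm_num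
        _ ≤ _ := this
    calc toR3 l i ^ 2 = |toR3 l i| ^ 2 := (sq_abs _).symm
      _ ≤ (ninf l : ℝ) ^ 2 := by
          apply pow_le_pow_left₀ (abs_nonneg _) h1
  have hre : ∀ i : Fin 3, ‖toR3 l i‖ ^ 2 = toR3 l i ^ 2 := fun i => by
    simp [Real.norm_eq_abs, sq_abs]
  simp only [hre]
  calc Real.sqrt (∑ i, toR3 l i ^ 2) ≤ Real.sqrt (∑ _i : Fin 3, (ninf l : ℝ) ^ 2) := by
        apply Real.sqrt_le_sqrt
        exact Finset.sum_le_sum fun i _ => h i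
    _ ≤ Real.sqrt ((2 * ninf l : ℝ) ^ 2) := by
        apply Real.sqrt_le_sqrt
        simp [Finset.sum_const]
        nlinarith [sq_nonneg (ninf l : ℝ), Nat.cast_nonneg (α := ℝ) (ninf l)]
    _ = 2 * ninf l := by
        rw [Real.sqrt_sq (by positivity)]

lemma one_le_znorm {l : Z3} (hl : l ≠ 0) : 1 ≤ znorm l := by
  have h1 : 1 ≤ ninf l := Nat.one_le_iff_ne_zero.mpr (fun h => hl (ninf_eq_zero.mp h))
  calc (1:ℝ) ≤ (ninf l : ℝ) := by exact_mod_cast h1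
    _ ≤ znorm l := ninf_le_znorm l



/-- box of radius n -/
def box (n : ℕ) : Finset Z3 :=
  Fintype.piFinset fun _ : Fin 3 => Finset.Icc (-(n:ℤ)) (n:ℤ)

lemma mem_box {l : Z3} {n : ℕ} : l ∈ box n ↔ ∀ i, (l i).natAbs ≤ n := by
  simp only [box, Fintype.mem_piFinset, Finset.mem_Icc]
  constructor
  · intro h i; have := h i; omega
  · intro h i; have := h i; omega

lemma card_box (n : ℕ) : (box n).card = (2*n+1)^3 := by
  rw [box, Fintype.card_piFinset]
  have : (Finset.Icc (-(n:ℤ)) (n:ℤ)).card = 2*n+1 := by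
    rw [Int.card_Icc]; omega
  simp [this]

/-- the shell finset -/
def shellF (n : ℕ) : Finset Z3 := box n \ box (n-1)

lemma card_shellF {n : ℕ} (hn : 1 ≤ n) : (shellF n).card ≤ 26 * n^2 := by
  have hsub : box (n-1) ⊆ box n := by
    intro l hl
    rw [mem_box] at *
    intro i; exact le_trans (hl i) (by omega)
  rw [shellF, Finset.card_sdiff_of_subset hsub, card_box, card_box]
  obtain ⟨m, rfl⟩ : ∃ m, n = m + 1 := ⟨n-1, by omega⟩
  simp only [Nat.add_sub_cancel]
  have h : (2*(m+1)+1)^3 = (2*m+1)^3 + (24*m^2+48*m+26) := by ring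
  rw [h, Nat.add_sub_cancel_left]
  nlinarith [m.zero_le]



lemma mem_shellF {l : Z3} {n : ℕ} (hn : 1 ≤ n) : l ∈ shellF n ↔ ninf l = n := by
  rw [shellF, Finset.mem_sdiff, mem_box, mem_box]
  constructor
  · rintro ⟨h1, h2⟩
    have ha : ninf l ≤ n := Finset.sup_le fun i _ => h1 i
    have hb : ¬ (ninf l ≤ n - 1) := by
      intro h
      exact h2 fun i => le_trans (coord_le_ninf l i) h
    omega
  · intro h
    constructor
    · intro i; exact h ▸ coord_le_ninf l i
    · intro hall
      have : ninf l ≤ n - 1 := Finset.sup_le fun i _ => hall i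
      omega

open ENNReal in
/-- Master shell-decomposition bound. -/
lemma tsum_ninf_le (c : ℕ → ℝ≥0∞) (hc0 : c 0 = 0) (H : Z3 → ℝ≥0∞)
    (hH : ∀ l, H l ≤ c (ninf l)) :
    ∑' l : Z3, H l ≤ ∑' n : ℕ, (26 * n ^ 2 : ℕ) * c n := by
  rw [← (Equiv.sigmaFiberEquiv ninf).tsum_eq H, ENNReal.tsum_sigma']
  apply ENNReal.tsum_le_tsum
  intro n
  rcases Nat.eq_zero_or_pos n with rfl | hn
  · have hz : ∀ x : {x // ninf x = 0}, H ((Equiv.sigmaFiberEquiv ninf) ⟨0, x⟩) = 0 := by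
      intro x
      have : H x.val ≤ c (ninf x.val) := hH x.val
      rw [x.prop, hc0] at this
      exact le_antisymm this (zero_le)
    calc ∑' x : {x // ninf x = 0}, H ((Equiv.sigmaFiberEquiv ninf) ⟨0, x⟩)
        = ∑' _x : {x // ninf x = 0}, (0:ℝ≥0∞) := tsum_congr hz
      _ = 0 := tsum_zero
      _ ≤ _ := zero_le
  · -- transfer to shellF n
    calc ∑' x : {x // ninf x = n}, H ((Equiv.sigmaFiberEquiv ninf) ⟨n, x⟩)
        = ∑' x : {x // ninf x = n}, H x.val := by rfl
      _ = ∑' x : {x // x ∈ shellF n}, H x.val := by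
          rw [← (Equiv.subtypeEquivRight fun x => (mem_shellF (l := x) hn).symm).tsum_eq
            (fun x : {x // x ∈ shellF n} => H x.val)]
          apply tsum_congr
          intro x
          rfl
      _ = ∑ x ∈ shellF n, H x := Finset.tsum_subtype _ _
      _ ≤ (shellF n).card • c n := Finset.sum_le_card_nsmul _ _ _
            (fun x hx => by rw [← (mem_shellF hn).mp hx]; exact hH x)
      _ ≤ (26 * n ^ 2 : ℕ) * c n := by
          rw [nsmul_eq_mul]
          exact mul_le_mul_left (by exact_mod_cast Nat.cast_le.mpr (card_shellF hn)) _


/-- Key inequality 1 (concavity): for `0 ≤ b`, `b^(1-ε) + (1-ε)(b+1)^(-ε) ≤ (b+1)^(1-ε)`. -/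
lemma key1 {ε : ℝ} (hε : 0 < ε) (hε1 : ε < 1) {b : ℝ} (hb : 0 ≤ b) :
    b ^ (1-ε) + (1-ε) * (b+1) ^ (-ε) ≤ (b+1) ^ (1-ε) := by
  have hb1 : (0:ℝ) < b + 1 := by linarith
  have hs : -1 ≤ -(1/(b+1)) := by
    rw [neg_le_neg_iff]
    rw [div_le_one hb1]
    linarith
  have hber := rpow_one_add_le_one_add_mul_self hs (by linarith : (0:ℝ) ≤ 1-ε)
    (by linarith : 1-ε ≤ 1)
  have he1 : 1 + -(1/(b+1)) = b/(b+1) := by field_simp; ring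
  rw [he1] at hber
  -- hber : (b/(b+1))^(1-ε) ≤ 1 + (1-ε) * -(1/(b+1))
  have hmul := mul_le_mul_of_nonneg_right hber (Real.rpow_nonneg hb1.le (1-ε))
  have hlhs : (b/(b+1)) ^ (1-ε) * (b+1) ^ (1-ε) = b ^ (1-ε) := by
    rw [← Real.mul_rpow (by positivity) hb1.le]
    rw [div_mul_cancel₀]
    exact hb1.ne'
  rw [hlhs] at hmul
  have hrhs : (1 + (1-ε) * -(1/(b+1))) * (b+1) ^ (1-ε)
      = (b+1) ^ (1-ε) - (1-ε) * (b+1) ^ (-ε) := by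
    have h2 : (b+1) ^ (1-ε) * (b+1)⁻¹ = (b+1) ^ (-ε) := by
      rw [← Real.rpow_neg_one (b+1), ← Real.rpow_add hb1]
      congr 1
      ring
    rw [← h2]
    field_simp
    ring
  rw [hrhs] at hmul
  linarith

/-- Key inequality 2 (convexity): for `1 ≤ b`, `p = 1+2ε`:
`p * (b+1)^(-(2+2ε)) ≤ b^(-p) - (b+1)^(-p)`. -/
lemma key2 {ε : ℝ} (hε : 0 < ε) {b : ℝ} (hb : 1 ≤ b) :
    (1+2*ε) * (b+1) ^ (-(2+2*ε)) ≤ b ^ (-(1+2*ε)) - (b+1) ^ (-(1+2*ε)) := by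
  have hb0 : (0:ℝ) < b := by linarith
  have hb1 : (0:ℝ) < b + 1 := by linarith
  set p : ℝ := 1 + 2*ε with hp
  have hp1 : (1:ℝ) ≤ p := by simp [hp]; linarith
  have hob : (0:ℝ) ≤ 1/b := by positivity
  have hber := one_add_mul_self_le_rpow_one_add (by linarith : (-1:ℝ) ≤ 1/b) hp1
  have he1 : 1 + 1/b = (b+1)/b := by field_simp
  rw [he1] at hber
  -- hber : 1 + p * (1/b) ≤ ((b+1)/b)^p
  have hmul := mul_le_mul_of_nonneg_right hber (Real.rpow_nonneg hb1.le (-p))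
  have hrhs : ((b+1)/b) ^ p * (b+1) ^ (-p) = b ^ (-p) := by
    rw [Real.div_rpow hb1.le hb0.le, div_mul_eq_mul_div,
      ← Real.rpow_add hb1, add_neg_cancel, Real.rpow_zero]
    rw [Real.rpow_neg hb0.le, one_div]
  rw [hrhs] at hmul
  have hstep : p * (b+1) ^ (-(2+2*ε)) ≤ p * (1/b) * (b+1) ^ (-p) := by
    have h1 : (b+1) ^ (-(2+2*ε)) = (b+1) ^ (-p) * (b+1)⁻¹ := by
      rw [← Real.rpow_neg_one (b+1), ← Real.rpow_add hb1]
      norm_num [hp]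
      ring_nf
    rw [h1]
    have h2 : (b+1)⁻¹ ≤ 1/b := by
      rw [one_div]
      apply inv_anti₀ hb0
      linarith
    have hpos : 0 ≤ (b+1) ^ (-p) := Real.rpow_nonneg hb1.le _
    have hppos : 0 ≤ p := by linarith
    calc p * ((b+1) ^ (-p) * (b+1)⁻¹) = p * (b+1)⁻¹ * (b+1) ^ (-p) := by ring
      _ ≤ p * (1/b) * (b+1) ^ (-p) := by
          apply mul_le_mul_of_nonneg_right _ hpos
          apply mul_le_mul_of_nonneg_left h2 hppos
  have hexp : (1 + p * (1/b)) * (b+1) ^ (-p) = (b+1) ^ (-p) + p * (1/b) * (b+1) ^ (-p) := by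
    ring
  rw [hexp] at hmul
  calc p * (b+1) ^ (-(2+2*ε)) ≤ p * (1/b) * (b+1) ^ (-p) := hstep
    _ ≤ b ^ (-(1+2*ε)) - (b+1) ^ (-(1+2*ε)) := by rw [← hp]; linarith

/-- telescoping partial sum bound for `Σ n^(-ε)` -/
lemma RN1 {ε : ℝ} (hε : 0 < ε) (hε1 : ε < 1) (M : ℕ) :
    ∑ n ∈ Finset.range (M+1), (if 1 ≤ n then ((n:ℝ)) ^ (-ε) else 0)
      ≤ (1-ε)⁻¹ * (M:ℝ) ^ (1-ε) := by
  induction M with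
  | zero => simp [Real.zero_rpow (by linarith : (1:ℝ)-ε ≠ 0)]
  | succ M ih =>
    rw [Finset.sum_range_succ]
    have hkey := key1 hε hε1 (b := (M:ℝ)) (Nat.cast_nonneg M)
    have h1 : (0:ℝ) < 1 - ε := by linarith
    have hterm : (if 1 ≤ M+1 then ((M+1:ℕ):ℝ) ^ (-ε) else 0) = ((M:ℝ)+1) ^ (-ε) := by
      rw [if_pos (by omega)]
      push_cast
      ring_nf
    rw [hterm]
    have : ((M+1:ℕ):ℝ) ^ (1-ε) = ((M:ℝ)+1) ^ (1-ε) := by push_cast; ring_nf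
    rw [this]
    rw [← sub_nonneg]
    rw [← sub_nonneg] at ih
    have hineq : (1-ε)⁻¹ * (((M:ℝ)+1) ^ (1-ε) - (M:ℝ) ^ (1-ε)) ≥ ((M:ℝ)+1) ^ (-ε) := by
      have hk2 : (1-ε) * ((M:ℝ)+1) ^ (-ε) ≤ ((M:ℝ)+1) ^ (1-ε) - (M:ℝ) ^ (1-ε) := by
        linarith
      have := mul_le_mul_of_nonneg_left hk2 (le_of_lt (inv_pos.mpr h1))
      rwa [← mul_assoc, inv_mul_cancel₀ (ne_of_gt h1), one_mul] at this
    nlinarith [ih, hineq]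

/-- telescoping partial sum bound for tail `Σ_{n>M} n^(-(2+2ε))` -/
lemma RN2 {ε : ℝ} (hε : 0 < ε) (M : ℕ) (hM : 1 ≤ M) (j : ℕ) :
    ∑ n ∈ Finset.range (M+1+j), (if M < n then ((n:ℝ)) ^ (-(2+2*ε)) else 0)
      ≤ (M:ℝ) ^ (-(1+2*ε)) := by
  have hmain : ∀ j : ℕ, ∑ n ∈ Finset.range (M+1+j), (if M < n then ((n:ℝ)) ^ (-(2+2*ε)) else 0)
      ≤ (1+2*ε)⁻¹ * ((M:ℝ) ^ (-(1+2*ε)) - ((M+j:ℕ):ℝ) ^ (-(1+2*ε))) := by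
    intro j
    induction j with
    | zero =>
      rw [Finset.sum_eq_zero, Nat.add_zero]
      · simp
      · intro n hn
        rw [Finset.mem_range] at hn
        rw [if_neg (by omega)]
    | succ j ih =>
      have hrange : M+1+(j+1) = (M+1+j) + 1 := by omega
      rw [hrange, Finset.sum_range_succ]
      have hb : (1:ℝ) ≤ ((M+j:ℕ):ℝ) := by
        have : 1 ≤ M + j := by omega
        exact_mod_cast this
      have hkey := key2 hε hb
      have hterm : (if M < M+1+j then ((M+1+j:ℕ):ℝ) ^ (-(2+2*ε)) else 0)
          = (((M+j:ℕ):ℝ)+1) ^ (-(2+2*ε)) := by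
        rw [if_pos (by omega)]
        congr 1
        push_cast
        ring
      rw [hterm]
      have hcast : ((M+(j+1):ℕ):ℝ) = ((M+j:ℕ):ℝ)+1 := by push_cast; ring
      rw [hcast]
      have hp : (0:ℝ) < 1+2*ε := by linarith
      have h2 : (((M+j:ℕ):ℝ)+1) ^ (-(2+2*ε))
          ≤ (1+2*ε)⁻¹ * (((M+j:ℕ):ℝ) ^ (-(1+2*ε)) - (((M+j:ℕ):ℝ)+1) ^ (-(1+2*ε))) := by
        rw [← mul_le_mul_iff_right₀ hp]
        calc (1+2*ε) * (((M+j:ℕ):ℝ)+1) ^ (-(2+2*ε))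
            ≤ ((M+j:ℕ):ℝ) ^ (-(1+2*ε)) - (((M+j:ℕ):ℝ)+1) ^ (-(1+2*ε)) := hkey
          _ = (1+2*ε) * ((1+2*ε)⁻¹ * (((M+j:ℕ):ℝ) ^ (-(1+2*ε)) - (((M+j:ℕ):ℝ)+1) ^ (-(1+2*ε)))) := by
              rw [← mul_assoc, mul_inv_cancel₀ (ne_of_gt hp), one_mul]
      linarith
  calc ∑ n ∈ Finset.range (M+1+j), (if M < n then ((n:ℝ)) ^ (-(2+2*ε)) else 0)
      ≤ (1+2*ε)⁻¹ * ((M:ℝ) ^ (-(1+2*ε)) - ((M+j:ℕ):ℝ) ^ (-(1+2*ε))) := hmain j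
    _ ≤ (M:ℝ) ^ (-(1+2*ε)) := by
        have hp : (0:ℝ) < 1+2*ε := by linarith
        have h1 : (1+2*ε)⁻¹ ≤ 1 := by
          rw [inv_le_one_iff₀]; right; linarith
        have h2 : (0:ℝ) ≤ ((M+j:ℕ):ℝ) ^ (-(1+2*ε)) := Real.rpow_nonneg (Nat.cast_nonneg _) _
        have h3 : (0:ℝ) ≤ (M:ℝ) ^ (-(1+2*ε)) := Real.rpow_nonneg (Nat.cast_nonneg _) _
        have h4 := mul_le_mul_of_nonneg_right h1 h3
        have h5 : 0 ≤ (1+2*ε)⁻¹ * ((M+j:ℕ):ℝ) ^ (-(1+2*ε)) :=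
          mul_nonneg (inv_nonneg.mpr hp.le) h2
        nlinarith [h4, h5]

/-- counting-type partial sum bound -/
lemma RN3 (v : ℝ) (hv : 0 ≤ v) (M : ℕ) :
    ∑ n ∈ Finset.range (M+1), (if 1 ≤ n then 26 * (n:ℝ)^2 * v else 0)
      ≤ 26 * (M:ℝ)^3 * v := by
  induction M with
  | zero => simp
  | succ M ih =>
    rw [Finset.sum_range_succ, if_pos (by omega)]
    push_cast
    have : ((M:ℝ))^3 + ((M:ℝ)+1)^2 ≤ ((M:ℝ)+1)^3 := by
      nlinarith [Nat.cast_nonneg (α := ℝ) M]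
    nlinarith [Nat.cast_nonneg (α := ℝ) M, ih]

open ENNReal in
lemma natmul_ofReal (m : ℕ) (P : Prop) [Decidable P] (x : ℝ) (hx : 0 ≤ x) :
    (m : ℝ≥0∞) * (if P then ENNReal.ofReal x else 0)
      = ENNReal.ofReal (if P then (m:ℝ) * x else 0) := by
  split
  · rw [← ENNReal.ofReal_natCast m, ← ENNReal.ofReal_mul (Nat.cast_nonneg m)]
  · simp

open ENNReal in
lemma NL1 {ε : ℝ} (hε : 0 < ε) (hε1 : ε < 1) (T v : ℝ) (hT : 0 ≤ T) (hv : 0 ≤ v) :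
    ∑' n : ℕ, ((26 * n ^ 2 : ℕ) : ℝ≥0∞) *
        (if 1 ≤ n ∧ (n:ℝ) ≤ T then ENNReal.ofReal (v * (n:ℝ) ^ (-(2+ε))) else 0)
      ≤ ENNReal.ofReal (26 * v * ((1-ε)⁻¹ * T ^ (1-ε))) := by
  set M := ⌊T⌋₊ with hM
  have hsupp : ∀ n ∉ Finset.range (M+1), ((26 * n ^ 2 : ℕ) : ℝ≥0∞) *
      (if 1 ≤ n ∧ (n:ℝ) ≤ T then ENNReal.ofReal (v * (n:ℝ) ^ (-(2+ε))) else 0) = 0 := by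
    intro n hn
    rw [Finset.mem_range, not_lt] at hn
    have : T < n := by
      have := (Nat.floor_lt hT).mp (by omega : M < n)
      exact this
    rw [if_neg (by push_neg; intro _; linarith), mul_zero]
  rw [tsum_eq_sum hsupp]
  have hterm : ∀ n, ((26 * n ^ 2 : ℕ) : ℝ≥0∞) *
      (if 1 ≤ n ∧ (n:ℝ) ≤ T then ENNReal.ofReal (v * (n:ℝ) ^ (-(2+ε))) else 0)
      = ENNReal.ofReal (if 1 ≤ n ∧ (n:ℝ) ≤ T then ((26*n^2:ℕ):ℝ) * (v * (n:ℝ) ^ (-(2+ε))) else 0) :=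
    fun n => natmul_ofReal _ _ _ (by positivity)
  simp only [hterm]
  rw [← ENNReal.ofReal_sum_of_nonneg (fun n _ => by positivity)]
  apply ENNReal.ofReal_le_ofReal
  have hpt : ∀ n ∈ Finset.range (M+1),
      (if 1 ≤ n ∧ (n:ℝ) ≤ T then ((26*n^2:ℕ):ℝ) * (v * (n:ℝ) ^ (-(2+ε))) else 0)
      ≤ 26 * v * (if 1 ≤ n then (n:ℝ) ^ (-ε) else 0) := by
    intro n _
    by_cases h : 1 ≤ n ∧ (n:ℝ) ≤ T
    · rw [if_pos h, if_pos h.1]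
      have hn0 : (0:ℝ) < n := by exact_mod_cast h.1
      have hsq : ((n:ℝ))^2 * (n:ℝ) ^ (-(2+ε)) = (n:ℝ) ^ (-ε) := by
        rw [← Real.rpow_natCast (n:ℝ) 2, ← Real.rpow_add hn0]
        congr 1
        push_cast
        ring
      push_cast
      apply le_of_eq
      calc 26 * (n:ℝ)^2 * (v * (n:ℝ) ^ (-(2+ε)))
          = 26 * v * ((n:ℝ)^2 * (n:ℝ) ^ (-(2+ε))) := by ring
        _ = 26 * v * (n:ℝ) ^ (-ε) := by rw [hsq]
    · rw [if_neg h]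
      split
      · positivity
      · positivity
  calc ∑ n ∈ Finset.range (M+1), (if 1 ≤ n ∧ (n:ℝ) ≤ T then ((26*n^2:ℕ):ℝ) * (v * (n:ℝ) ^ (-(2+ε))) else 0)
      ≤ ∑ n ∈ Finset.range (M+1), 26 * v * (if 1 ≤ n then (n:ℝ) ^ (-ε) else 0) :=
        Finset.sum_le_sum hpt
    _ = 26 * v * ∑ n ∈ Finset.range (M+1), (if 1 ≤ n then (n:ℝ) ^ (-ε) else 0) := by
        rw [Finset.mul_sum]
    _ ≤ 26 * v * ((1-ε)⁻¹ * (M:ℝ) ^ (1-ε)) := by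
        apply mul_le_mul_of_nonneg_left (RN1 hε hε1 M) (by positivity)
    _ ≤ 26 * v * ((1-ε)⁻¹ * T ^ (1-ε)) := by
        apply mul_le_mul_of_nonneg_left _ (by positivity)
        apply mul_le_mul_of_nonneg_left _
          (by have h19 : (0:ℝ) < 1-ε := by linarith
              positivity)
        exact Real.rpow_le_rpow (Nat.cast_nonneg M) (Nat.floor_le hT) (by linarith)

open ENNReal in
lemma NL3 (T v : ℝ) (hT : 0 ≤ T) (hv : 0 ≤ v) :
    ∑' n : ℕ, ((26 * n ^ 2 : ℕ) : ℝ≥0∞) *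
        (if 1 ≤ n ∧ (n:ℝ) ≤ T then ENNReal.ofReal v else 0)
      ≤ ENNReal.ofReal (26 * T^3 * v) := by
  set M := ⌊T⌋₊ with hM
  have hsupp : ∀ n ∉ Finset.range (M+1), ((26 * n ^ 2 : ℕ) : ℝ≥0∞) *
      (if 1 ≤ n ∧ (n:ℝ) ≤ T then ENNReal.ofReal v else 0) = 0 := by
    intro n hn
    rw [Finset.mem_range, not_lt] at hn
    have : T < n := (Nat.floor_lt hT).mp (by omega : M < n)
    rw [if_neg (by push_neg; intro _; linarith), mul_zero]
  rw [tsum_eq_sum hsupp]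
  have hterm : ∀ n, ((26 * n ^ 2 : ℕ) : ℝ≥0∞) *
      (if 1 ≤ n ∧ (n:ℝ) ≤ T then ENNReal.ofReal v else 0)
      = ENNReal.ofReal (if 1 ≤ n ∧ (n:ℝ) ≤ T then ((26*n^2:ℕ):ℝ) * v else 0) :=
    fun n => natmul_ofReal _ _ _ hv
  simp only [hterm]
  rw [← ENNReal.ofReal_sum_of_nonneg (fun n _ => by positivity)]
  apply ENNReal.ofReal_le_ofReal
  have hpt : ∀ n ∈ Finset.range (M+1),
      (if 1 ≤ n ∧ (n:ℝ) ≤ T then ((26*n^2:ℕ):ℝ) * v else 0)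
      ≤ (if 1 ≤ n then 26 * (n:ℝ)^2 * v else 0) := by
    intro n _
    by_cases h : 1 ≤ n ∧ (n:ℝ) ≤ T
    · rw [if_pos h, if_pos h.1]
      push_cast
      apply le_of_eq
      ring
    · rw [if_neg h]
      split
      · positivity
      · exact le_rfl
  calc ∑ n ∈ Finset.range (M+1), (if 1 ≤ n ∧ (n:ℝ) ≤ T then ((26*n^2:ℕ):ℝ) * v else 0)
      ≤ ∑ n ∈ Finset.range (M+1), (if 1 ≤ n then 26 * (n:ℝ)^2 * v else 0) :=
        Finset.sum_le_sum hpt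
    _ ≤ 26 * (M:ℝ)^3 * v := RN3 v hv M
    _ ≤ 26 * T^3 * v := by
        apply mul_le_mul_of_nonneg_right _ hv
        apply mul_le_mul_of_nonneg_left _ (by norm_num)
        exact pow_le_pow_left₀ (Nat.cast_nonneg M) (Nat.floor_le hT) 3

open ENNReal in
lemma NL2 {ε : ℝ} (hε : 0 < ε) (hε1 : ε < 1) (W v : ℝ) (hW : 1 ≤ W) (hv : 0 ≤ v) :
    ∑' n : ℕ, ((26 * n ^ 2 : ℕ) : ℝ≥0∞) *
        (if 1 ≤ n ∧ W < (n:ℝ) then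
          ENNReal.ofReal (v * ((n:ℝ) ^ (-(2+ε)) * (n:ℝ) ^ (-(2+ε)))) else 0)
      ≤ ENNReal.ofReal (26 * v * (8 * W ^ (-(1+2*ε)))) := by
  set M := ⌊W⌋₊ with hMdef
  have hM1 : 1 ≤ M := Nat.le_floor (by exact_mod_cast hW)
  have hMle : (M:ℝ) ≤ W := Nat.floor_le (by linarith)
  have hterm : ∀ n, ((26 * n ^ 2 : ℕ) : ℝ≥0∞) *
      (if 1 ≤ n ∧ W < (n:ℝ) then
        ENNReal.ofReal (v * ((n:ℝ) ^ (-(2+ε)) * (n:ℝ) ^ (-(2+ε)))) else 0)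
      = ENNReal.ofReal (if 1 ≤ n ∧ W < (n:ℝ) then
          ((26*n^2:ℕ):ℝ) * (v * ((n:ℝ) ^ (-(2+ε)) * (n:ℝ) ^ (-(2+ε)))) else 0) :=
    fun n => natmul_ofReal _ _ _ (by positivity)
  simp only [hterm]
  have hpt : ∀ n : ℕ,
      (if 1 ≤ n ∧ W < (n:ℝ) then
        ((26*n^2:ℕ):ℝ) * (v * ((n:ℝ) ^ (-(2+ε)) * (n:ℝ) ^ (-(2+ε)))) else 0)
      ≤ 26 * v * (if M < n then (n:ℝ) ^ (-(2+2*ε)) else 0) := by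
    intro n
    by_cases h : 1 ≤ n ∧ W < (n:ℝ)
    · have hMn : M < n := by
        have : (M:ℝ) < (n:ℝ) := lt_of_le_of_lt hMle h.2
        exact_mod_cast this
      rw [if_pos h, if_pos hMn]
      have hn0 : (0:ℝ) < n := by exact_mod_cast h.1
      have hsq : ((n:ℝ))^2 * ((n:ℝ) ^ (-(2+ε)) * (n:ℝ) ^ (-(2+ε))) = (n:ℝ) ^ (-(2+2*ε)) := by
        rw [← Real.rpow_natCast (n:ℝ) 2, ← Real.rpow_add hn0, ← Real.rpow_add hn0]
        congr 1
        push_cast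
        ring
      push_cast
      apply le_of_eq
      calc 26 * (n:ℝ)^2 * (v * ((n:ℝ) ^ (-(2+ε)) * (n:ℝ) ^ (-(2+ε))))
          = 26 * v * ((n:ℝ)^2 * ((n:ℝ) ^ (-(2+ε)) * (n:ℝ) ^ (-(2+ε)))) := by ring
        _ = 26 * v * (n:ℝ) ^ (-(2+2*ε)) := by rw [hsq]
    · rw [if_neg h]
      split
      · positivity
      · positivity
  calc ∑' n : ℕ, ENNReal.ofReal (if 1 ≤ n ∧ W < (n:ℝ) then
          ((26*n^2:ℕ):ℝ) * (v * ((n:ℝ) ^ (-(2+ε)) * (n:ℝ) ^ (-(2+ε)))) else 0)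
      ≤ ∑' n : ℕ, ENNReal.ofReal (26 * v * (if M < n then (n:ℝ) ^ (-(2+2*ε)) else 0)) :=
        ENNReal.tsum_le_tsum fun n => ENNReal.ofReal_le_ofReal (hpt n)
    _ ≤ ENNReal.ofReal (26 * v * (8 * W ^ (-(1+2*ε)))) := by
        rw [ENNReal.tsum_eq_iSup_sum' (fun i => Finset.range (M+1+i)) (fun t => by
          obtain ⟨i, hi⟩ := t.exists_nat_subset_range
          exact ⟨i, hi.trans (Finset.range_subset_range.mpr (by omega))⟩)]
        apply iSup_le
        intro j
        rw [← ENNReal.ofReal_sum_of_nonneg (fun n _ => by positivity)]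
        apply ENNReal.ofReal_le_ofReal
        have hsum : ∑ n ∈ Finset.range (M+1+j), 26 * v * (if M < n then (n:ℝ) ^ (-(2+2*ε)) else 0)
            = 26 * v * ∑ n ∈ Finset.range (M+1+j), (if M < n then (n:ℝ) ^ (-(2+2*ε)) else 0) := by
          rw [Finset.mul_sum]
        rw [hsum]
        have hb := RN2 hε M hM1 j
        have htail : (M:ℝ) ^ (-(1+2*ε)) ≤ 8 * W ^ (-(1+2*ε)) := by
          have hW2 : W/2 ≤ (M:ℝ) := by
            rcases le_or_gt 2 W with h2 | h2
            · have := Nat.sub_one_lt_floor W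
              linarith [Nat.sub_one_lt_floor W]
            · have : M = 1 := by
                have : (M:ℝ) ≤ W := hMle
                have h1 : M ≤ 1 := by
                  by_contra hc
                  push_neg at hc
                  have : (2:ℝ) ≤ (M:ℝ) := by exact_mod_cast hc
                  linarith
                omega
              rw [this]
              norm_num
              linarith
          have hW2pos : (0:ℝ) < W/2 := by linarith
          have hp : (0:ℝ) ≤ 1+2*ε := by linarith
          have h1 : (M:ℝ) ^ (-(1+2*ε)) ≤ (W/2) ^ (-(1+2*ε)) := by
            rw [Real.rpow_neg hW2pos.le, Real.rpow_neg (by positivity : (0:ℝ) ≤ (M:ℝ))]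
            apply inv_anti₀ (Real.rpow_pos_of_pos hW2pos _)
            exact Real.rpow_le_rpow hW2pos.le hW2 hp
          have h2 : (W/2) ^ (-(1+2*ε)) = 2 ^ (1+2*ε) * W ^ (-(1+2*ε)) := by
            rw [Real.div_rpow (by linarith) (by norm_num)]
            rw [Real.rpow_neg (by norm_num : (0:ℝ) ≤ 2)]
            rw [div_eq_mul_inv, inv_inv, mul_comm]
          have h3 : (2:ℝ) ^ (1+2*ε) ≤ 8 := by
            have : (2:ℝ) ^ (1+2*ε) ≤ 2 ^ (3:ℝ) :=
              Real.rpow_le_rpow_of_exponent_le (by norm_num) (by linarith)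
            have h8 : (2:ℝ) ^ (3:ℝ) = 8 := by
              rw [show (3:ℝ) = ((3:ℕ):ℝ) by norm_num, Real.rpow_natCast]
              norm_num
            linarith
          have h4 : (0:ℝ) ≤ W ^ (-(1+2*ε)) := Real.rpow_nonneg (by linarith) _
          calc (M:ℝ) ^ (-(1+2*ε)) ≤ (W/2) ^ (-(1+2*ε)) := h1
            _ = 2 ^ (1+2*ε) * W ^ (-(1+2*ε)) := h2
            _ ≤ 8 * W ^ (-(1+2*ε)) := mul_le_mul_of_nonneg_right h3 h4
        calc 26 * v * ∑ n ∈ Finset.range (M+1+j), (if M < n then (n:ℝ) ^ (-(2+2*ε)) else 0)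
            ≤ 26 * v * ((M:ℝ) ^ (-(1+2*ε))) := by
              apply mul_le_mul_of_nonneg_left hb (by positivity)
          _ ≤ 26 * v * (8 * W ^ (-(1+2*ε))) := by
              apply mul_le_mul_of_nonneg_left htail (by positivity)

lemma rpow_neg_antitone {x y p : ℝ} (hx : 0 < x) (hxy : x ≤ y) (hp : 0 ≤ p) :
    y ^ (-p) ≤ x ^ (-p) := by
  rw [Real.rpow_neg (by linarith : (0:ℝ) ≤ y), Real.rpow_neg hx.le]
  exact inv_anti₀ (Real.rpow_pos_of_pos hx p) (Real.rpow_le_rpow hx.le hxy hp)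

lemma half_rpow {K p : ℝ} (hK : 0 < K) (hp : 0 ≤ p) (hp3 : p ≤ 3) :
    (K/2) ^ (-p) ≤ 8 * K ^ (-p) := by
  have h2 : (K/2) ^ (-p) = 2 ^ p * K ^ (-p) := by
    rw [Real.div_rpow hK.le (by norm_num)]
    rw [Real.rpow_neg (by norm_num : (0:ℝ) ≤ 2)]
    rw [div_eq_mul_inv, inv_inv, mul_comm]
  have h3 : (2:ℝ) ^ p ≤ 8 := by
    have : (2:ℝ) ^ p ≤ 2 ^ (3:ℝ) :=
      Real.rpow_le_rpow_of_exponent_le (by norm_num) hp3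
    have h8 : (2:ℝ) ^ (3:ℝ) = 8 := by
      rw [show (3:ℝ) = ((3:ℕ):ℝ) by norm_num, Real.rpow_natCast]
      norm_num
    linarith
  rw [h2]
  exact mul_le_mul_of_nonneg_right h3 (Real.rpow_nonneg hK.le _)

lemma div_bound {a b a0 b0 p : ℝ} (ha0 : 0 < a0) (hb0 : 0 < b0)
    (ha : a0 ≤ a) (hb : b0 ≤ b) (hp : 0 ≤ p) :
    1 / (a ^ p * b ^ p) ≤ a0 ^ (-p) * b0 ^ (-p) := by
  have ha' : (0:ℝ) < a := lt_of_lt_of_le ha0 ha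
  have hb' : (0:ℝ) < b := lt_of_lt_of_le hb0 hb
  rw [one_div, mul_inv, ← Real.rpow_neg ha'.le, ← Real.rpow_neg hb'.le]
  exact mul_le_mul (rpow_neg_antitone ha0 ha hp) (rpow_neg_antitone hb0 hb hp)
    (Real.rpow_nonneg hb'.le _) (Real.rpow_nonneg ha0.le _)

open ENNReal

def Wf (α K : ℝ) (l : Z3) : ℝ≥0∞ :=
  if l ≠ 0 ∧ znorm l ≤ K/2 then ENNReal.ofReal ((K/2) ^ (-α) * znorm l ^ (-α)) else 0

def Af (α K : ℝ) (l : Z3) : ℝ≥0∞ :=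
  if l ≠ 0 ∧ znorm l ≤ 2*K then ENNReal.ofReal ((K/2) ^ (-α) * (K/2) ^ (-α)) else 0

def Bf (α K : ℝ) (l : Z3) : ℝ≥0∞ :=
  if l ≠ 0 ∧ 2*K < znorm l then ENNReal.ofReal (8 * (znorm l ^ (-α) * znorm l ^ (-α))) else 0

lemma znorm_sub_comm (a b : Z3) : znorm (a - b) = znorm (b - a) := by
  rw [znorm, znorm, toR3_sub, toR3_sub, norm_sub_rev]

lemma pointwise {ε α : ℝ} (hε : 0 < ε) (hε1 : ε < 1) (hα : α = 2+ε)
    {k : Z3} (hk : k ≠ 0) (l : Z3) {e : ℝ} (he : e ≤ 0) :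
    ENNReal.ofReal (if l ≠ 0 ∧ l ≠ k then Real.exp e / (znorm (k-l) ^ α * znorm l ^ α) else 0)
      ≤ Wf α (znorm k) l + Wf α (znorm k) (k-l) + Af α (znorm k) l + Bf α (znorm k) l := by
  set K := znorm k with hKdef
  have hK1 : 1 ≤ K := one_le_znorm hk
  have hKpos : (0:ℝ) < K := by linarith
  have hK2 : (0:ℝ) < K/2 := by linarith
  have hαpos : (0:ℝ) ≤ α := by rw [hα]; linarith
  have hα3 : α ≤ 3 := by rw [hα]; linarith
  by_cases hc : l ≠ 0 ∧ l ≠ k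
  · rw [if_pos hc]
    have hl0 : l ≠ 0 := hc.1
    have hkl0 : k - l ≠ 0 := sub_ne_zero_of_ne (Ne.symm hc.2)
    have hb1 : 1 ≤ znorm l := one_le_znorm hl0
    have ha1 : 1 ≤ znorm (k-l) := one_le_znorm hkl0
    have hbpos : (0:ℝ) < znorm l := by linarith
    have hapos : (0:ℝ) < znorm (k-l) := by linarith
    have htri : K ≤ znorm l + znorm (k-l) := znorm_triangle k l
    have htri2 : znorm l ≤ K + znorm (k-l) := by
      have := znorm_triangle l k
      rw [znorm_sub_comm l k] at this
      exact this
    have hexp : Real.exp e ≤ 1 := Real.exp_le_one_iff.mpr he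
    have hdpos : (0:ℝ) < znorm (k-l) ^ α * znorm l ^ α :=
      mul_pos (Real.rpow_pos_of_pos hapos α) (Real.rpow_pos_of_pos hbpos α)
    have hfle : Real.exp e / (znorm (k-l) ^ α * znorm l ^ α)
        ≤ 1 / (znorm (k-l) ^ α * znorm l ^ α) :=
      (div_le_div_iff_of_pos_right hdpos).mpr hexp
    by_cases h1 : znorm l ≤ K/2
    · -- region 1 : bound by Wf l
      have ha : K/2 ≤ znorm (k-l) := by linarith
      have hval : Real.exp e / (znorm (k-l) ^ α * znorm l ^ α)
          ≤ (K/2) ^ (-α) * znorm l ^ (-α) :=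
        le_trans hfle (div_bound hK2 hbpos ha le_rfl hαpos)
      calc ENNReal.ofReal (Real.exp e / (znorm (k-l) ^ α * znorm l ^ α))
          ≤ Wf α K l := by
            rw [Wf, if_pos ⟨hl0, h1⟩]
            exact ENNReal.ofReal_le_ofReal hval
        _ ≤ _ := le_add_right (le_add_right (le_add_right le_rfl))
    · by_cases h2 : znorm (k-l) ≤ K/2
      · -- region 2 : bound by Wf (k-l)
        have hb : K/2 ≤ znorm l := by linarith
        have hval : Real.exp e / (znorm (k-l) ^ α * znorm l ^ α)
            ≤ (K/2) ^ (-α) * znorm (k-l) ^ (-α) := by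
          refine le_trans hfle ?_
          rw [mul_comm (znorm (k-l) ^ α) (znorm l ^ α)]
          exact div_bound hK2 hapos hb le_rfl hαpos
        calc ENNReal.ofReal (Real.exp e / (znorm (k-l) ^ α * znorm l ^ α))
            ≤ Wf α K (k-l) := by
              rw [Wf, if_pos ⟨hkl0, h2⟩]
              exact ENNReal.ofReal_le_ofReal hval
          _ ≤ _ := le_add_right (le_add_right (le_add_left le_rfl))
      · push_neg at h1 h2
        by_cases h3 : znorm l ≤ 2*K
        · -- region 3a : bound by Af l
          have hval : Real.exp e / (znorm (k-l) ^ α * znorm l ^ α)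
              ≤ (K/2) ^ (-α) * (K/2) ^ (-α) :=
            le_trans hfle (div_bound hK2 hK2 h2.le h1.le hαpos)
          calc ENNReal.ofReal (Real.exp e / (znorm (k-l) ^ α * znorm l ^ α))
              ≤ Af α K l := by
                rw [Af, if_pos ⟨hl0, h3⟩]
                exact ENNReal.ofReal_le_ofReal hval
            _ ≤ _ := le_add_right (le_add_left le_rfl)
        · -- region 3b : bound by Bf l
          push_neg at h3
          have ha : znorm l / 2 ≤ znorm (k-l) := by linarith
          have hb2 : (0:ℝ) < znorm l / 2 := by linarith
          have hval : Real.exp e / (znorm (k-l) ^ α * znorm l ^ α)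
              ≤ 8 * (znorm l ^ (-α) * znorm l ^ (-α)) := by
            refine le_trans hfle ?_
            refine le_trans (div_bound hb2 hbpos ha le_rfl hαpos) ?_
            rw [mul_comm ((znorm l/2) ^ (-α)) (znorm l ^ (-α)), mul_comm
              (8:ℝ) (znorm l ^ (-α) * znorm l ^ (-α)), mul_assoc]
            apply mul_le_mul_of_nonneg_left _ (Real.rpow_nonneg hbpos.le _)
            calc (znorm l/2) ^ (-α) ≤ 8 * znorm l ^ (-α) := half_rpow hbpos hαpos hα3
              _ = znorm l ^ (-α) * 8 := by ring
          calc ENNReal.ofReal (Real.exp e / (znorm (k-l) ^ α * znorm l ^ α))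
              ≤ Bf α K l := by
                rw [Bf, if_pos ⟨hl0, h3⟩]
                exact ENNReal.ofReal_le_ofReal hval
            _ ≤ _ := le_add_left le_rfl
  · rw [if_neg hc]
    simp

lemma one_le_ninf {l : Z3} (hl : l ≠ 0) : 1 ≤ ninf l :=
  Nat.one_le_iff_ne_zero.mpr (fun h => hl (ninf_eq_zero.mp h))

lemma sumW {ε α : ℝ} (hε : 0 < ε) (hε1 : ε < 1) (hα : α = 2+ε) {K : ℝ} (hK : 1 ≤ K) :
    ∑' l : Z3, Wf α K l ≤ ENNReal.ofReal ((208 * (1-ε)⁻¹) * K ^ (-(1+2*ε))) := by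
  subst hα
  have hKpos : (0:ℝ) < K := by linarith
  have hK2 : (0:ℝ) < K/2 := by linarith
  have hv : (0:ℝ) ≤ (K/2) ^ (-(2+ε)) := Real.rpow_nonneg hK2.le _
  calc ∑' l : Z3, Wf (2+ε) K l
      ≤ ∑' n : ℕ, (26 * n ^ 2 : ℕ) *
          (if 1 ≤ n ∧ (n:ℝ) ≤ K/2 then
            ENNReal.ofReal ((K/2) ^ (-(2+ε)) * (n:ℝ) ^ (-(2+ε))) else 0) := by
        apply tsum_ninf_le _ (by norm_num)
        intro l
        rw [Wf]
        split
        · rename_i h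
          have hn1 : 1 ≤ ninf l := one_le_ninf h.1
          have hnr : (ninf l : ℝ) ≤ K/2 := le_trans (ninf_le_znorm l) h.2
          have hnpos : (0:ℝ) < (ninf l : ℝ) := by exact_mod_cast hn1
          rw [if_pos ⟨hn1, hnr⟩]
          apply ENNReal.ofReal_le_ofReal
          exact mul_le_mul_of_nonneg_left
            (rpow_neg_antitone hnpos (ninf_le_znorm l) (by linarith)) hv
        · exact zero_le
    _ ≤ ENNReal.ofReal (26 * ((K/2) ^ (-(2+ε))) * ((1-ε)⁻¹ * (K/2) ^ (1-ε))) :=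
        NL1 hε hε1 (K/2) _ hK2.le hv
    _ ≤ ENNReal.ofReal ((208 * (1-ε)⁻¹) * K ^ (-(1+2*ε))) := by
        apply ENNReal.ofReal_le_ofReal
        have hcollect : (K/2) ^ (-(2+ε)) * (K/2) ^ (1-ε) = (K/2) ^ (-(1+2*ε)) := by
          rw [← Real.rpow_add hK2]
          congr 1
          ring
        have hhalf : (K/2) ^ (-(1+2*ε)) ≤ 8 * K ^ (-(1+2*ε)) :=
          half_rpow hKpos (by linarith) (by linarith)
        have hinv : (0:ℝ) ≤ (1-ε)⁻¹ := by
          have : (0:ℝ) < 1-ε := by linarith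
          positivity
        calc 26 * ((K/2) ^ (-(2+ε))) * ((1-ε)⁻¹ * (K/2) ^ (1-ε))
            = 26 * (1-ε)⁻¹ * ((K/2) ^ (-(2+ε)) * (K/2) ^ (1-ε)) := by ring
          _ = 26 * (1-ε)⁻¹ * (K/2) ^ (-(1+2*ε)) := by rw [hcollect]
          _ ≤ 26 * (1-ε)⁻¹ * (8 * K ^ (-(1+2*ε))) := by
              apply mul_le_mul_of_nonneg_left hhalf (by positivity)
          _ = (208 * (1-ε)⁻¹) * K ^ (-(1+2*ε)) := by ring

lemma sumA {ε α : ℝ} (hε : 0 < ε) (hε1 : ε < 1) (hα : α = 2+ε) {K : ℝ} (hK : 1 ≤ K) :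
    ∑' l : Z3, Af α K l ≤ ENNReal.ofReal (13312 * K ^ (-(1+2*ε))) := by
  subst hα
  have hKpos : (0:ℝ) < K := by linarith
  have hK2 : (0:ℝ) < K/2 := by linarith
  have hv : (0:ℝ) ≤ (K/2) ^ (-(2+ε)) * (K/2) ^ (-(2+ε)) :=
    mul_nonneg (Real.rpow_nonneg hK2.le _) (Real.rpow_nonneg hK2.le _)
  calc ∑' l : Z3, Af (2+ε) K l
      ≤ ∑' n : ℕ, (26 * n ^ 2 : ℕ) *
          (if 1 ≤ n ∧ (n:ℝ) ≤ 2*K then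
            ENNReal.ofReal ((K/2) ^ (-(2+ε)) * (K/2) ^ (-(2+ε))) else 0) := by
        apply tsum_ninf_le _ (by norm_num)
        intro l
        rw [Af]
        split
        · rename_i h
          have hn1 : 1 ≤ ninf l := one_le_ninf h.1
          have hnr : (ninf l : ℝ) ≤ 2*K := le_trans (ninf_le_znorm l) h.2
          rw [if_pos ⟨hn1, hnr⟩]
        · exact zero_le
    _ ≤ ENNReal.ofReal (26 * (2*K)^3 * ((K/2) ^ (-(2+ε)) * (K/2) ^ (-(2+ε)))) :=
        NL3 (2*K) _ (by linarith) hv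
    _ ≤ ENNReal.ofReal (13312 * K ^ (-(1+2*ε))) := by
        apply ENNReal.ofReal_le_ofReal
        have hhalf : (K/2) ^ (-(2+ε)) ≤ 8 * K ^ (-(2+ε)) :=
          half_rpow hKpos (by linarith) (by linarith)
        have hknn : (0:ℝ) ≤ K ^ (-(2+ε)) := Real.rpow_nonneg hKpos.le _
        have hvle : (K/2) ^ (-(2+ε)) * (K/2) ^ (-(2+ε))
            ≤ 64 * (K ^ (-(2+ε)) * K ^ (-(2+ε))) := by
          calc (K/2) ^ (-(2+ε)) * (K/2) ^ (-(2+ε))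
              ≤ (8 * K ^ (-(2+ε))) * (8 * K ^ (-(2+ε))) :=
                mul_le_mul hhalf hhalf (Real.rpow_nonneg hK2.le _) (by positivity)
            _ = 64 * (K ^ (-(2+ε)) * K ^ (-(2+ε))) := by ring
        have hcollect : K^(3:ℕ) * (K ^ (-(2+ε)) * K ^ (-(2+ε))) = K ^ (-(1+2*ε)) := by
          rw [← Real.rpow_natCast K 3, ← Real.rpow_add hKpos, ← Real.rpow_add hKpos]
          congr 1
          push_cast
          ring
        calc 26 * (2*K)^3 * ((K/2) ^ (-(2+ε)) * (K/2) ^ (-(2+ε)))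
            ≤ 26 * (2*K)^3 * (64 * (K ^ (-(2+ε)) * K ^ (-(2+ε)))) := by
              apply mul_le_mul_of_nonneg_left hvle (by positivity)
          _ = 13312 * (K^(3:ℕ) * (K ^ (-(2+ε)) * K ^ (-(2+ε)))) := by ring
          _ = 13312 * K ^ (-(1+2*ε)) := by rw [hcollect]

lemma sumB {ε α : ℝ} (hε : 0 < ε) (hε1 : ε < 1) (hα : α = 2+ε) {K : ℝ} (hK : 1 ≤ K) :
    ∑' l : Z3, Bf α K l ≤ ENNReal.ofReal (1664 * K ^ (-(1+2*ε))) := by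
  subst hα
  have hKpos : (0:ℝ) < K := by linarith
  calc ∑' l : Z3, Bf (2+ε) K l
      ≤ ∑' n : ℕ, (26 * n ^ 2 : ℕ) *
          (if 1 ≤ n ∧ K < (n:ℝ) then
            ENNReal.ofReal (8 * ((n:ℝ) ^ (-(2+ε)) * (n:ℝ) ^ (-(2+ε)))) else 0) := by
        apply tsum_ninf_le _ (by norm_num)
        intro l
        rw [Bf]
        split
        · rename_i h
          have hn1 : 1 ≤ ninf l := one_le_ninf h.1
          have hnpos : (0:ℝ) < (ninf l : ℝ) := by exact_mod_cast hn1
          have h2n : znorm l ≤ 2 * ninf l := znorm_le_two_ninf l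
          have hKn : K < (ninf l : ℝ) := by linarith [h.2]
          rw [if_pos ⟨hn1, hKn⟩]
          apply ENNReal.ofReal_le_ofReal
          apply mul_le_mul_of_nonneg_left _ (by norm_num)
          have h4 := rpow_neg_antitone hnpos (ninf_le_znorm l) (by linarith : (0:ℝ) ≤ 2+ε)
          exact mul_le_mul h4 h4 (Real.rpow_nonneg (by linarith [one_le_znorm h.1]) _)
            (Real.rpow_nonneg hnpos.le _)
        · exact zero_le
    _ ≤ ENNReal.ofReal (26 * 8 * (8 * K ^ (-(1+2*ε)))) :=
        NL2 hε hε1 K 8 hK (by norm_num)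
    _ = ENNReal.ofReal (1664 * K ^ (-(1+2*ε))) := by
        congr 1
        ring

lemma final_bridge {ι : Type*} (f : ι → ℝ) (hfnn : ∀ l, 0 ≤ f l) (R : ℝ)
    (hR : 0 ≤ R) (h : ∑' l, ENNReal.ofReal (f l) ≤ ENNReal.ofReal R) :
    ∑' l, f l ≤ R := by
  have hne : ∑' l, ENNReal.ofReal (f l) ≠ ⊤ := (lt_of_le_of_lt h ENNReal.ofReal_lt_top).ne
  have hsumm : Summable f := by
    have h2 := ENNReal.summable_toReal hne
    refine (summable_congr ?_).mp h2
    intro l; exact ENNReal.toReal_ofReal (hfnn l)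
  have he : ENNReal.ofReal (∑' l, f l) = ∑' l, ENNReal.ofReal (f l) :=
    ENNReal.ofReal_tsum_of_nonneg hfnn hsumm
  have h3 := ENNReal.toReal_mono ENNReal.ofReal_ne_top (he ▸ h)
  rwa [ENNReal.toReal_ofReal (tsum_nonneg hfnn), ENNReal.toReal_ofReal hR] at h3

end Aux

/-- Let `0 < ε < 1` and `α = 2 + ε`.  There is a constant `D > 0` depending
only on `ε` such that for every integer `m ≥ 0` and every `k ∈ ℤ³ \ {0}`,
`Σ_{l ≠ 0, l ≠ k} exp(−2m‖l − k/2‖²) / (‖k − l‖^α ‖l‖^α) ≤ D ‖k‖^{−(1 + 2ε)}`. -/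
theorem statement2 (ε : ℝ) (hε : 0 < ε) (hε1 : ε < 1) (α : ℝ) (hα : α = 2 + ε) :
    ∃ D : ℝ, 0 < D ∧ ∀ (m : ℕ) (k : Z3), k ≠ 0 →
      (∑' l : Z3, if l ≠ 0 ∧ l ≠ k then
          Real.exp (-2 * (m : ℝ) * ‖toR3 l - (1 / 2 : ℝ) • toR3 k‖ ^ 2)
            / (znorm (k - l) ^ α * znorm l ^ α)
        else 0)
      ≤ D * znorm k ^ (-(1 + 2 * ε)) := by
  have h1ε : (0:ℝ) < 1 - ε := by linarith
  refine ⟨416*(1-ε)⁻¹ + 14976, by positivity, ?_⟩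
  intro m k hk
  have hK1 : (1:ℝ) ≤ znorm k := Aux.one_le_znorm hk
  have hKpos : (0:ℝ) < znorm k := by linarith
  have hRnn : (0:ℝ) ≤ (416*(1-ε)⁻¹ + 14976) * znorm k ^ (-(1 + 2 * ε)) :=
    mul_nonneg (by positivity) (Real.rpow_nonneg hKpos.le _)
  refine Aux.final_bridge _ (fun l => ?_) _ hRnn ?_
  · split
    · apply div_nonneg (Real.exp_pos _).le
      exact mul_nonneg (Real.rpow_nonneg (Aux.znorm_nonneg _) _)
        (Real.rpow_nonneg (Aux.znorm_nonneg _) _)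
    · exact le_rfl
  · calc ∑' l : Z3, ENNReal.ofReal (if l ≠ 0 ∧ l ≠ k then
          Real.exp (-2 * (m : ℝ) * ‖toR3 l - (1 / 2 : ℝ) • toR3 k‖ ^ 2)
            / (znorm (k - l) ^ α * znorm l ^ α) else 0)
        ≤ ∑' l : Z3, (Aux.Wf α (znorm k) l + Aux.Wf α (znorm k) (k-l)
            + Aux.Af α (znorm k) l + Aux.Bf α (znorm k) l) := by
          apply ENNReal.tsum_le_tsum
          intro l
          apply Aux.pointwise hε hε1 hα hk l
          have hm : (0:ℝ) ≤ (m:ℝ) := Nat.cast_nonneg m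
          have hsq : (0:ℝ) ≤ ‖toR3 l - (1 / 2 : ℝ) • toR3 k‖ ^ 2 := sq_nonneg _
          nlinarith
      _ = (∑' l : Z3, Aux.Wf α (znorm k) l) + (∑' l : Z3, Aux.Wf α (znorm k) (k-l))
          + (∑' l : Z3, Aux.Af α (znorm k) l) + (∑' l : Z3, Aux.Bf α (znorm k) l) := by
          rw [ENNReal.tsum_add, ENNReal.tsum_add, ENNReal.tsum_add]
      _ = (∑' l : Z3, Aux.Wf α (znorm k) l) + (∑' l : Z3, Aux.Wf α (znorm k) l)
          + (∑' l : Z3, Aux.Af α (znorm k) l) + (∑' l : Z3, Aux.Bf α (znorm k) l) := by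
          have hsub : ∑' l : Z3, Aux.Wf α (znorm k) (k - l)
              = ∑' l : Z3, Aux.Wf α (znorm k) l := by
            rw [← (Equiv.subLeft k).tsum_eq (Aux.Wf α (znorm k))]
            exact tsum_congr fun l => by simp [Equiv.subLeft]
          rw [hsub]
      _ ≤ ENNReal.ofReal ((208 * (1-ε)⁻¹) * znorm k ^ (-(1+2*ε)))
          + ENNReal.ofReal ((208 * (1-ε)⁻¹) * znorm k ^ (-(1+2*ε)))
          + ENNReal.ofReal (13312 * znorm k ^ (-(1+2*ε)))
          + ENNReal.ofReal (1664 * znorm k ^ (-(1+2*ε))) :=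
          add_le_add (add_le_add (add_le_add (Aux.sumW hε hε1 hα hK1)
            (Aux.sumW hε hε1 hα hK1)) (Aux.sumA hε hε1 hα hK1)) (Aux.sumB hε hε1 hα hK1)
      _ ≤ ENNReal.ofReal ((416*(1-ε)⁻¹ + 14976) * znorm k ^ (-(1 + 2 * ε))) := by
          have hkn : (0:ℝ) ≤ znorm k ^ (-(1+2*ε)) := Real.rpow_nonneg hKpos.le _
          rw [← ENNReal.ofReal_add (by positivity) (by positivity),
            ← ENNReal.ofReal_add (by positivity) (by positivity),
            ← ENNReal.ofReal_add (by positivity) (by positivity)]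
          apply ENNReal.ofReal_le_ofReal
          apply le_of_eq
          ring
end
end

section
/- Let 0 < 3ε < 1, α = 2 + ε, δ > 0, M > 0, and let m ≥ 0 be an integer. Suppose H(s, k) = exp(−(m + s)|k|²) v₀(k) where |v₀(k)| ≤ δ|k|^{−α} for all k ≠ 0, and suppose h : [0, ∞) × (ℤ³ \ {0}) → ℂ³ satisfies |h(s, k)| ≤ M |k|^{−(2 + 2ε)} exp(−(m + s)|k|²/2) for all s ∈ [0, 1] and k ≠ 0. Then there exists a constant D > 0 depending only on ε such that for all t ∈ [0, 1] and all k ∈ ℤ³ \ {0}: |B(H, h)(t, k)| ≤ D δ M exp(−(m + t)|k|²/3) (1 − exp(−t|k|²)) / |k|, and the same bound holds for |B(h, H)(t, k)|. -/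
noncomputable section

open Real MeasureTheory

abbrev C3 : Type := EuclideanSpace ℂ (Fin 3)

/-- The integer vector `k` regarded as a vector in `ℂ³`. -/
def toC3 (k : Z3) : C3 := WithLp.toLp 2 (fun i => (k i : ℂ))

/-- The bilinear dot product `⟨a, b⟩ = Σᵢ aᵢbᵢ` on `ℂ³` (no conjugation). -/
def cdot (a b : C3) : ℂ := ∑ i, a i * b i

/-- The Leray projector `P_k x = x − (⟨k, x⟩/|k|²) k`. -/
def leray (k : Z3) (x : C3) : C3 := x - ((cdot (toC3 k) x) / ((znorm k : ℂ) ^ 2)) • toC3 k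

/-- The Navier–Stokes bilinear operator
`B(f,g)(t,k) = 2πi ∫₀ᵗ e^{−(t−s)|k|²} Σ_{l ≠ 0, l ≠ k} ⟨k, f(s,k−l)⟩ P_k g(s,l) ds`. -/
def nsB (f g : ℝ → Z3 → C3) (t : ℝ) (k : Z3) : C3 :=
  (2 * (π : ℂ) * Complex.I) • ∫ s in (0:ℝ)..t,
    Real.exp (-(t - s) * znorm k ^ 2) •
      ∑' l : Z3, if l ≠ 0 ∧ l ≠ k then cdot (toC3 k) (f s (k - l)) • leray k (g s l)
        else (0 : C3)

lemma znorm_nonneg (k : Z3) : 0 ≤ znorm k := norm_nonneg _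

lemma znorm_sq (k : Z3) : znorm k ^ 2 = ∑ i, ((k i : ℝ)) ^ 2 := by
  have h : znorm k = Real.sqrt (∑ i, ((k i : ℝ)) ^ 2) := by
    simp [znorm, toR3, EuclideanSpace.norm_eq, Real.norm_eq_abs, sq_abs]
  rw [h, Real.sq_sqrt (by positivity)]

lemma one_le_znorm_sq {k : Z3} (hk : k ≠ 0) : 1 ≤ znorm k ^ 2 := by
  rw [znorm_sq]
  obtain ⟨i, hi⟩ : ∃ i, k i ≠ 0 := by
    by_contra h; push_neg at h; exact hk (funext h)
  have h1 : (1:ℝ) ≤ ((k i : ℝ)) ^ 2 := by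
    have : (1:ℤ) ≤ (k i)^2 := by
      rcases lt_or_gt_of_ne hi with h | h <;> nlinarith
    exact_mod_cast this
  calc (1:ℝ) ≤ ((k i:ℝ))^2 := h1
    _ ≤ ∑ j, ((k j:ℝ))^2 :=
        Finset.single_le_sum (f := fun j => ((k j:ℝ))^2) (fun j _ => by positivity)
          (Finset.mem_univ i)

lemma one_le_znorm {k : Z3} (hk : k ≠ 0) : 1 ≤ znorm k := by
  nlinarith [one_le_znorm_sq hk, znorm_nonneg k]

lemma znorm_pos {k : Z3} (hk : k ≠ 0) : 0 < znorm k := lt_of_lt_of_le one_pos (one_le_znorm hk)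

lemma znorm_triangle (k l : Z3) : znorm k ≤ znorm (k - l) + znorm l := by
  have h : toR3 k = toR3 (k - l) + toR3 l := by
    ext i; simp [toR3]
  rw [znorm, h]; exact norm_add_le _ _

lemma norm_toC3 (k : Z3) : ‖toC3 k‖ = znorm k := by
  simp [toC3, znorm, toR3, EuclideanSpace.norm_eq, Real.norm_eq_abs, sq_abs]

lemma cdot_eq_inner (k : Z3) (x : C3) : cdot (toC3 k) x = inner ℂ (toC3 k) x := by
  simp only [PiLp.inner_apply, RCLike.inner_apply', cdot, toC3, PiLp.toLp_apply]
  congr 1; funext i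
  rw [map_intCast]

lemma norm_cdot_le (k : Z3) (x : C3) : ‖cdot (toC3 k) x‖ ≤ znorm k * ‖x‖ := by
  rw [cdot_eq_inner, ← norm_toC3 k]
  exact norm_inner_le_norm _ _

lemma norm_leray_le {k : Z3} (hk : k ≠ 0) (x : C3) : ‖leray k x‖ ≤ 2 * ‖x‖ := by
  have hz := znorm_pos hk
  have h1 : ‖((cdot (toC3 k) x) / ((znorm k : ℂ) ^ 2)) • toC3 k‖ ≤ ‖x‖ := by
    rw [norm_smul, norm_div, norm_toC3]
    have h2 : ‖((znorm k : ℂ)) ^ 2‖ = znorm k ^ 2 := by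
      rw [norm_pow, Complex.norm_real, Real.norm_eq_abs, abs_of_pos hz]
    rw [h2]
    calc ‖cdot (toC3 k) x‖ / znorm k ^ 2 * znorm k
        ≤ (znorm k * ‖x‖) / znorm k ^ 2 * znorm k := by
          gcongr; exact norm_cdot_le k x
      _ = ‖x‖ := by field_simp
  calc ‖leray k x‖ ≤ ‖x‖ + ‖((cdot (toC3 k) x) / ((znorm k : ℂ) ^ 2)) • toC3 k‖ :=
        norm_sub_le _ _
    _ ≤ 2 * ‖x‖ := by linarith

-- summability over ℤ of (1+n^2)^(-2/3)
lemma summable_gZ : Summable (fun n : ℤ => ((1:ℝ) + (n:ℝ)^2) ^ (-(2/3) : ℝ)) := by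
  have h1 : Summable (fun n : ℤ => |(n:ℝ)| ^ (-(4/3):ℝ) + if n = 0 then 1 else 0) := by
    apply (Real.summable_abs_int_rpow (by norm_num)).add
    apply summable_of_ne_finset_zero (s := {0})
    intro n hn
    simp only [Finset.mem_singleton] at hn
    simp [hn]
  apply h1.of_nonneg_of_le (fun n => by positivity)
  intro n
  by_cases hn : n = 0
  · simp [hn]
  · have hn2 : (1:ℝ) ≤ (n:ℝ)^2 := by
      have : (1:ℤ) ≤ n^2 := by rcases lt_or_gt_of_ne hn with h | h <;> nlinarith
      exact_mod_cast this
    have key : ((1:ℝ) + (n:ℝ)^2) ^ (-(2/3) : ℝ) ≤ ((n:ℝ)^2) ^ (-(2/3):ℝ) :=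
      Real.rpow_le_rpow_of_nonpos (by linarith) (by linarith) (by norm_num)
    have keq : ((n:ℝ)^2) ^ (-(2/3):ℝ) = |(n:ℝ)| ^ (-(4/3):ℝ) := by
      rw [← sq_abs, ← Real.rpow_natCast |(n:ℝ)| 2, ← Real.rpow_mul (abs_nonneg _)]
      norm_num
    calc ((1:ℝ) + (n:ℝ)^2) ^ (-(2/3) : ℝ) ≤ ((n:ℝ)^2) ^ (-(2/3):ℝ) := key
      _ = |(n:ℝ)| ^ (-(4/3):ℝ) := keq
      _ ≤ |(n:ℝ)| ^ (-(4/3):ℝ) + if n = 0 then 1 else 0 := by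
          have : (0:ℝ) ≤ if n = 0 then (1:ℝ) else 0 := by positivity
          linarith

def e3 : (Fin 3 → ℤ) ≃ ℤ × ℤ × ℤ where
  toFun j := (j 0, j 1, j 2)
  invFun p := ![p.1, p.2.1, p.2.2]
  left_inv j := by funext i; fin_cases i <;> rfl
  right_inv p := rfl

lemma summable_G : Summable (fun j : Fin 3 → ℤ =>
    ((1:ℝ) + (j 0:ℝ)^2) ^ (-(2/3):ℝ) * (((1:ℝ) + (j 1:ℝ)^2) ^ (-(2/3):ℝ) *
      ((1:ℝ) + (j 2:ℝ)^2) ^ (-(2/3):ℝ))) := by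
  have hpos : (0:ℤ → ℝ) ≤ fun n : ℤ => ((1:ℝ) + (n:ℝ)^2) ^ (-(2/3):ℝ) := by
    intro n; positivity
  have h23 : Summable (fun p : ℤ × ℤ => ((1:ℝ) + (p.1:ℝ)^2) ^ (-(2/3):ℝ) *
      ((1:ℝ) + (p.2:ℝ)^2) ^ (-(2/3):ℝ)) :=
    Summable.mul_of_nonneg (f := fun n : ℤ => ((1:ℝ) + (n:ℝ)^2) ^ (-(2/3):ℝ))
      (g := fun n : ℤ => ((1:ℝ) + (n:ℝ)^2) ^ (-(2/3):ℝ)) summable_gZ summable_gZ hpos hpos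
  have hpos2 : (0:ℤ × ℤ → ℝ) ≤ fun p : ℤ × ℤ => ((1:ℝ) + (p.1:ℝ)^2) ^ (-(2/3):ℝ) *
      ((1:ℝ) + (p.2:ℝ)^2) ^ (-(2/3):ℝ) := by
    intro p; positivity
  have h : Summable (fun p : ℤ × ℤ × ℤ => ((1:ℝ) + (p.1:ℝ)^2) ^ (-(2/3):ℝ) *
      (((1:ℝ) + (p.2.1:ℝ)^2) ^ (-(2/3):ℝ) * ((1:ℝ) + (p.2.2:ℝ)^2) ^ (-(2/3):ℝ))) :=
    Summable.mul_of_nonneg (f := fun n : ℤ => ((1:ℝ) + (n:ℝ)^2) ^ (-(2/3):ℝ))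
      (g := fun p : ℤ × ℤ => ((1:ℝ) + (p.1:ℝ)^2) ^ (-(2/3):ℝ) *
        ((1:ℝ) + (p.2:ℝ)^2) ^ (-(2/3):ℝ))
      summable_gZ h23 hpos hpos2
  have h2 := h.comp_injective e3.injective
  exact h2.congr (fun j => rfl)

/-- weight `|j|⁻⁴` (0 at the origin). -/
def uZ (j : Z3) : ℝ := if j = 0 then 0 else (znorm j ^ 4)⁻¹

lemma uZ_nonneg (j : Z3) : 0 ≤ uZ j := by
  unfold uZ; split <;> positivity

lemma uZ_le (j : Z3) : uZ j ≤ 4 * (((1:ℝ) + (j 0:ℝ)^2) ^ (-(2/3):ℝ) *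
    (((1:ℝ) + (j 1:ℝ)^2) ^ (-(2/3):ℝ) * ((1:ℝ) + (j 2:ℝ)^2) ^ (-(2/3):ℝ))) := by
  unfold uZ
  split
  · positivity
  · rename_i hj
    set a := ((j 0:ℝ))^2 with ha
    set b := ((j 1:ℝ))^2 with hb
    set c := ((j 2:ℝ))^2 with hc
    have ha0 : 0 ≤ a := by positivity
    have hb0 : 0 ≤ b := by positivity
    have hc0 : 0 ≤ c := by positivity
    have hS : znorm j ^ 2 = a + b + c := by
      rw [znorm_sq]; simp [Fin.sum_univ_three, ha, hb, hc]
    set S := znorm j ^ 2 with hSdef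
    have hS1 : 1 ≤ S := one_le_znorm_sq hj
    have hprod : ((1:ℝ)+a) * ((1+b) * (1+c)) ≤ (2*S)^3 := by
      have h1 : (1:ℝ)+a ≤ 2*S := by nlinarith
      have h2 : (1:ℝ)+b ≤ 2*S := by nlinarith
      have h3 : (1:ℝ)+c ≤ 2*S := by nlinarith
      calc ((1:ℝ)+a) * ((1+b) * (1+c)) ≤ (2*S) * ((2*S) * (2*S)) := by
            gcongr <;> nlinarith
        _ = (2*S)^3 := by ring
    have hGeq : ((1:ℝ) + a) ^ (-(2/3):ℝ) * (((1:ℝ) + b) ^ (-(2/3):ℝ) *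
        ((1:ℝ) + c) ^ (-(2/3):ℝ)) = (((1:ℝ)+a) * ((1+b) * (1+c))) ^ (-(2/3):ℝ) := by
      rw [Real.mul_rpow (by positivity) (by positivity),
        Real.mul_rpow (by positivity) (by positivity)]
    have hkey : ((2*S)^3 : ℝ) ^ (-(2/3):ℝ) ≤ (((1:ℝ)+a) * ((1+b) * (1+c))) ^ (-(2/3):ℝ) :=
      Real.rpow_le_rpow_of_nonpos (by positivity) hprod (by norm_num)
    have hcomp : ((2*S)^3 : ℝ) ^ (-(2/3):ℝ) = ((2*S)^2)⁻¹ := by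
      rw [← Real.rpow_natCast (2*S) 3, ← Real.rpow_mul (by positivity)]
      have h' : ((3:ℕ):ℝ) * (-(2/3)) = ((-2:ℤ) : ℝ) := by norm_num
      rw [h', Real.rpow_intCast]
      norm_num
    have h4 : (znorm j ^ 4)⁻¹ = 4 * ((2*S)^2)⁻¹ := by
      have : znorm j ^ 4 = S^2 := by rw [hSdef]; ring
      rw [this]
      have hS0 : (0:ℝ) < S := by linarith
      field_simp
      ring
    rw [hGeq, h4]
    have := hcomp ▸ hkey
    linarith [this]

lemma summable_uZ : Summable uZ :=
  (summable_G.mul_left 4).of_nonneg_of_le uZ_nonneg uZ_le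

def Cu : ℝ := ∑' j, uZ j

lemma Cu_nonneg : 0 ≤ Cu := tsum_nonneg uZ_nonneg

/-- the convolution weight -/
def cfun (k l : Z3) : ℝ :=
  if l ≠ 0 ∧ l ≠ k then ((znorm (k - l))^2 * (znorm l)^2)⁻¹ else 0

lemma cfun_nonneg (k l : Z3) : 0 ≤ cfun k l := by
  unfold cfun; split <;> positivity

lemma cfun_le (k l : Z3) : cfun k l ≤ uZ l + uZ (k - l) := by
  unfold cfun
  split
  · rename_i hcond
    obtain ⟨hl0, hlk⟩ := hcond
    have hkl : k - l ≠ 0 := sub_ne_zero.mpr (Ne.symm hlk)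
    have ha : 1 ≤ znorm (k - l) := one_le_znorm hkl
    have hb : 1 ≤ znorm l := one_le_znorm hl0
    have h1 : uZ l = (znorm l ^ 4)⁻¹ := by unfold uZ; simp [hl0]
    have h2 : uZ (k-l) = (znorm (k-l) ^ 4)⁻¹ := by unfold uZ; simp [hkl]
    rw [h1, h2]
    rcases le_total (znorm (k-l)) (znorm l) with h | h
    · have hsq : (znorm (k-l))^2 ≤ (znorm l)^2 := by nlinarith
      have : (znorm (k-l))^4 ≤ (znorm (k-l))^2 * (znorm l)^2 := by
        calc (znorm (k-l))^4 = (znorm (k-l))^2 * (znorm (k-l))^2 := by ring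
          _ ≤ (znorm (k-l))^2 * (znorm l)^2 :=
            mul_le_mul_of_nonneg_left hsq (by positivity)
      have hmain : ((znorm (k - l))^2 * (znorm l)^2)⁻¹ ≤ (znorm (k-l) ^ 4)⁻¹ := by
        apply inv_anti₀ (by positivity) this
      have : (0:ℝ) ≤ (znorm l ^4)⁻¹ := by positivity
      linarith
    · have hsq : (znorm l)^2 ≤ (znorm (k-l))^2 := by nlinarith
      have : (znorm l)^4 ≤ (znorm (k-l))^2 * (znorm l)^2 := by
        calc (znorm l)^4 = (znorm l)^2 * (znorm l)^2 := by ring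
          _ ≤ (znorm (k-l))^2 * (znorm l)^2 :=
            mul_le_mul_of_nonneg_right hsq (by positivity)
      have hmain : ((znorm (k - l))^2 * (znorm l)^2)⁻¹ ≤ (znorm l ^ 4)⁻¹ := by
        apply inv_anti₀ (by positivity) this
      have : (0:ℝ) ≤ (znorm (k-l) ^4)⁻¹ := by positivity
      linarith
  · exact add_nonneg (uZ_nonneg _) (uZ_nonneg _)

lemma summable_shift (k : Z3) : Summable (fun l => uZ (k - l)) :=
  summable_uZ.comp_injective (Equiv.subLeft k).injective

lemma summable_cfun (k : Z3) : Summable (cfun k) :=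
  (summable_uZ.add (summable_shift k)).of_nonneg_of_le (cfun_nonneg k) (cfun_le k)

lemma tsum_cfun_le (k : Z3) : ∑' l, cfun k l ≤ 2 * Cu := by
  have h1 : ∑' l, cfun k l ≤ ∑' l, (uZ l + uZ (k - l)) :=
    Summable.tsum_le_tsum (cfun_le k) (summable_cfun k) (summable_uZ.add (summable_shift k))
  have h2 : ∑' l, (uZ l + uZ (k - l)) = Cu + ∑' l, uZ (k - l) := by
    rw [Summable.tsum_add summable_uZ (summable_shift k)]; rfl
  have h3 : ∑' l, uZ (k - l) = Cu := (Equiv.subLeft k).tsum_eq uZ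
  rw [h2, h3] at h1
  linarith

lemma integral_exp_shift {c t : ℝ} (hc : 0 < c) :
    ∫ s in (0:ℝ)..t, Real.exp (c*(s-t)) = (1 - Real.exp (-(c*t)))/c := by
  have h : ∀ s ∈ Set.uIcc (0:ℝ) t, HasDerivAt (fun s => Real.exp (c*(s-t))/c)
      (Real.exp (c*(s-t))) s := by
    intro s _
    have h1 : HasDerivAt (fun s : ℝ => c*(s-t)) c s := by
      simpa using ((hasDerivAt_id s).sub_const t).const_mul c
    have := (Real.hasDerivAt_exp (c*(s-t))).comp s h1
    simpa [mul_div_assoc, mul_div_cancel_left₀, hc.ne'] using this.div_const c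
  have hi : IntervalIntegrable (fun s => Real.exp (c*(s-t))) MeasureTheory.volume 0 t :=
    (Real.continuous_exp.comp
      (continuous_const.mul (continuous_id.sub continuous_const))).intervalIntegrable 0 t
  rw [intervalIntegral.integral_eq_sub_of_hasDerivAt h hi]
  simp [mul_comm, sub_div]

lemma nsB_bound (A : ℝ) (hA : 0 ≤ A) (m : ℕ) (f g : ℝ → Z3 → C3) {k : Z3} (hk : k ≠ 0)
    {t : ℝ} (ht : t ∈ Set.Icc (0:ℝ) 1)
    (hfg : ∀ s ∈ Set.Icc (0:ℝ) 1, ∀ l : Z3, l ≠ 0 → l ≠ k →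
      ‖f s (k - l)‖ * ‖g s l‖ ≤ A * ((znorm (k-l))^2 * (znorm l)^2)⁻¹ *
        Real.exp (-((m:ℝ)+s) * znorm k^2 / 3)) :
    ‖nsB f g t k‖ ≤ 12 * π * (Cu + 1) * A * Real.exp (-((m:ℝ)+t)*znorm k^2/3) *
      (1 - Real.exp (-t * znorm k^2)) / znorm k := by
  obtain ⟨ht0, ht1⟩ := ht
  set x := znorm k ^ 2 with hxdef
  have hzk : 0 < znorm k := znorm_pos hk
  have hx : 0 < x := by positivity
  -- the summand
  set T : ℝ → C3 := fun s => ∑' l : Z3, if l ≠ 0 ∧ l ≠ k then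
      cdot (toC3 k) (f s (k - l)) • leray k (g s l) else (0 : C3) with hT
  set P : ℝ → ℝ := fun s => 2 * znorm k * (A * Real.exp (-((m:ℝ)+s) * x / 3)) with hP
  have hPnn : ∀ s, 0 ≤ P s := fun s => by positivity
  -- pointwise bound on terms
  have hterm : ∀ s ∈ Set.Icc (0:ℝ) 1, ∀ l : Z3,
      ‖if l ≠ 0 ∧ l ≠ k then cdot (toC3 k) (f s (k - l)) • leray k (g s l) else (0:C3)‖
        ≤ P s * cfun k l := by
    intro s hs l
    by_cases hcond : l ≠ 0 ∧ l ≠ k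
    · rw [if_pos hcond]
      unfold cfun
      rw [if_pos hcond]
      obtain ⟨hl0, hlk⟩ := hcond
      have h1 : ‖cdot (toC3 k) (f s (k - l)) • leray k (g s l)‖
          = ‖cdot (toC3 k) (f s (k - l))‖ * ‖leray k (g s l)‖ := norm_smul _ _
      rw [h1]
      calc ‖cdot (toC3 k) (f s (k - l))‖ * ‖leray k (g s l)‖
          ≤ (znorm k * ‖f s (k - l)‖) * (2 * ‖g s l‖) := by
            apply mul_le_mul (norm_cdot_le _ _) (norm_leray_le hk _) (norm_nonneg _)
            positivity
        _ = 2 * znorm k * (‖f s (k - l)‖ * ‖g s l‖) := by ring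
        _ ≤ 2 * znorm k * (A * ((znorm (k-l))^2 * (znorm l)^2)⁻¹ *
              Real.exp (-((m:ℝ)+s) * x / 3)) := by
            apply mul_le_mul_of_nonneg_left _ (by positivity)
            exact hfg s hs l hl0 hlk
        _ = P s * ((znorm (k - l))^2 * (znorm l)^2)⁻¹ := by rw [hP]; ring
    · rw [if_neg hcond]
      unfold cfun
      rw [if_neg hcond]
      simp [hPnn s]
  -- bound on the tsum
  have hTbound : ∀ s ∈ Set.Icc (0:ℝ) 1, ‖T s‖ ≤ P s * (2 * Cu) := by
    intro s hs
    have hsummable : Summable (fun l : Z3 =>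
        ‖if l ≠ 0 ∧ l ≠ k then cdot (toC3 k) (f s (k - l)) • leray k (g s l) else (0:C3)‖) :=
      ((summable_cfun k).mul_left (P s)).of_nonneg_of_le (fun l => norm_nonneg _)
        (hterm s hs)
    calc ‖T s‖ ≤ ∑' l, ‖if l ≠ 0 ∧ l ≠ k then
          cdot (toC3 k) (f s (k - l)) • leray k (g s l) else (0:C3)‖ :=
          norm_tsum_le_tsum_norm hsummable
      _ ≤ ∑' l, P s * cfun k l :=
          Summable.tsum_le_tsum (hterm s hs) hsummable ((summable_cfun k).mul_left (P s))
      _ = P s * ∑' l, cfun k l := tsum_mul_left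
      _ ≤ P s * (2 * Cu) := mul_le_mul_of_nonneg_left (tsum_cfun_le k) (hPnn s)
  -- constant and exponential bound on the integrand
  set K : ℝ := 4 * Cu * znorm k * A * Real.exp (-((m:ℝ)+t) * x / 3) with hK
  have hKnn : 0 ≤ K := by
    have := Cu_nonneg
    positivity
  have hintegrand : ∀ s ∈ Set.uIoc (0:ℝ) t,
      ‖Real.exp (-(t - s) * x) • T s‖ ≤ K * Real.exp ((2*x/3) * (s - t)) := by
    intro s hs
    rw [Set.uIoc_of_le ht0] at hs
    have hs01 : s ∈ Set.Icc (0:ℝ) 1 := ⟨le_of_lt hs.1, le_trans hs.2 ht1⟩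
    have h1 : ‖Real.exp (-(t - s) * x) • T s‖ = Real.exp (-(t - s) * x) * ‖T s‖ := by
      rw [norm_smul, Real.norm_eq_abs, abs_of_pos (Real.exp_pos _)]
    rw [h1]
    calc Real.exp (-(t - s) * x) * ‖T s‖
        ≤ Real.exp (-(t - s) * x) * (P s * (2 * Cu)) :=
          mul_le_mul_of_nonneg_left (hTbound s hs01) (le_of_lt (Real.exp_pos _))
      _ = K * Real.exp ((2*x/3) * (s - t)) := by
          have hee : Real.exp (-(t - s) * x) * Real.exp (-((m:ℝ)+s) * x / 3)
              = Real.exp (-((m:ℝ)+t) * x / 3) * Real.exp ((2*x/3) * (s - t)) := by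
            rw [← Real.exp_add, ← Real.exp_add]
            congr 1
            ring
          rw [hP, hK]
          calc Real.exp (-(t - s) * x) * (2 * znorm k * (A * Real.exp (-((m:ℝ)+s) * x / 3)) * (2 * Cu))
              = (4 * Cu * znorm k * A) *
                (Real.exp (-(t - s) * x) * Real.exp (-((m:ℝ)+s) * x / 3)) := by ring
            _ = (4 * Cu * znorm k * A) *
                (Real.exp (-((m:ℝ)+t) * x / 3) * Real.exp ((2*x/3) * (s - t))) := by rw [hee]
            _ = 4 * Cu * znorm k * A * Real.exp (-((m:ℝ)+t) * x / 3) *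
                Real.exp ((2*x/3) * (s - t)) := by ring
  -- integrate
  have hgi : IntervalIntegrable (fun s => K * Real.exp ((2*x/3) * (s - t)))
      MeasureTheory.volume 0 t := by
    apply Continuous.intervalIntegrable
    exact continuous_const.mul (Real.continuous_exp.comp
      (continuous_const.mul ((continuous_id.sub continuous_const))))
  have hineq : ‖∫ s in (0:ℝ)..t, Real.exp (-(t - s) * x) • T s‖
      ≤ |∫ s in (0:ℝ)..t, K * Real.exp ((2*x/3) * (s - t))| := by
    apply intervalIntegral.norm_integral_le_abs_of_norm_le _ hgi
    exact (ae_restrict_mem measurableSet_uIoc).mono hintegrand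
  have hval : ∫ s in (0:ℝ)..t, K * Real.exp ((2*x/3) * (s - t))
      = K * ((1 - Real.exp (-((2*x/3)*t)))/(2*x/3)) := by
    rw [intervalIntegral.integral_const_mul, integral_exp_shift (by positivity)]
  have htx : 0 ≤ t * x := mul_nonneg ht0 (le_of_lt hx)
  have hexp1 : Real.exp (-t*x) ≤ Real.exp (-((2*x/3)*t)) := by
    apply Real.exp_le_exp.mpr
    nlinarith
  have hexp0 : Real.exp (-((2*x/3)*t)) ≤ 1 := by
    apply Real.exp_le_one_iff.mpr
    nlinarith
  have h1mx : 0 ≤ 1 - Real.exp (-t*x) := by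
    nlinarith [Real.exp_le_one_iff.mpr (show -t*x ≤ 0 by nlinarith)]
  have hintle : K * ((1 - Real.exp (-((2*x/3)*t)))/(2*x/3))
      ≤ K * ((1 - Real.exp (-t*x)) * (3/(2*x))) := by
    apply mul_le_mul_of_nonneg_left _ hKnn
    have h23 : (1 - Real.exp (-((2*x/3)*t)))/(2*x/3) = (1 - Real.exp (-((2*x/3)*t))) * (3/(2*x)) := by
      field_simp
    rw [h23]
    apply mul_le_mul_of_nonneg_right (by linarith) (by positivity)
  have habs : |∫ s in (0:ℝ)..t, K * Real.exp ((2*x/3) * (s - t))|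
      ≤ K * ((1 - Real.exp (-t*x)) * (3/(2*x))) := by
    rw [hval, abs_of_nonneg]
    · exact hintle
    · apply mul_nonneg hKnn
      apply div_nonneg (by linarith) (by positivity)
  -- final computation
  have hfinal : ‖nsB f g t k‖ ≤ 2 * π * (K * ((1 - Real.exp (-t*x)) * (3/(2*x)))) := by
    unfold nsB
    rw [norm_smul]
    have hnorm2pi : ‖2 * (π : ℂ) * Complex.I‖ = 2 * π := by
      simp [norm_mul, Complex.norm_real, abs_of_nonneg Real.pi_nonneg]
    rw [hnorm2pi]
    exact mul_le_mul_of_nonneg_left (hineq.trans habs) (by positivity)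
  apply le_trans hfinal
  rw [hK]
  have heq : 2 * π * (4 * Cu * znorm k * A * Real.exp (-((m:ℝ)+t) * x / 3) *
      ((1 - Real.exp (-t*x)) * (3/(2*x))))
      = 12 * π * Cu * A * Real.exp (-((m:ℝ)+t)*x/3) * (1 - Real.exp (-t*x)) / znorm k := by
    rw [hxdef]
    field_simp
    ring
  rw [heq]
  gcongr
  linarith [Cu_nonneg]


lemma rpow_le_inv_sq {a p : ℝ} (ha : 1 ≤ a) (hp : 2 ≤ p) : a ^ (-p) ≤ (a^2)⁻¹ := by
  have h1 : a ^ (-p) ≤ a ^ (-2:ℝ) :=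
    Real.rpow_le_rpow_of_exponent_le ha (by linarith)
  have h2 : a ^ (-2:ℝ) = (a^2)⁻¹ := by
    rw [show (-2:ℝ) = ((-2:ℤ):ℝ) by norm_num, Real.rpow_intCast]
    norm_num
  rw [h2] at h1; exact h1

lemma exp_quad1 {r a b c : ℝ} (hr : 0 ≤ r) (ha : 0 ≤ a) (hb : 0 ≤ b) (hc : 0 ≤ c)
    (h : c ≤ a + b) :
    Real.exp (-r * a^2) * Real.exp (-r * b^2 / 2) ≤ Real.exp (-r * c^2 / 3) := by
  rw [← Real.exp_add]
  apply Real.exp_le_exp.mpr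
  have hq : c^2/3 ≤ a^2 + b^2/2 := by
    nlinarith [sq_nonneg (2*a-b), mul_nonneg (sub_nonneg.mpr h) (show (0:ℝ) ≤ a+b+c by linarith)]
  nlinarith [mul_le_mul_of_nonneg_left hq hr]

lemma exp_quad2 {r a b c : ℝ} (hr : 0 ≤ r) (ha : 0 ≤ a) (hb : 0 ≤ b) (hc : 0 ≤ c)
    (h : c ≤ a + b) :
    Real.exp (-r * a^2 / 2) * Real.exp (-r * b^2) ≤ Real.exp (-r * c^2 / 3) := by
  rw [← Real.exp_add]
  apply Real.exp_le_exp.mpr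
  have hq : c^2/3 ≤ a^2/2 + b^2 := by
    nlinarith [sq_nonneg (a-2*b), mul_nonneg (sub_nonneg.mpr h) (show (0:ℝ) ≤ a+b+c by linarith)]
  nlinarith [mul_le_mul_of_nonneg_left hq hr]


/-- Let `0 < 3ε < 1`, `α = 2 + ε`.  There is a constant `D > 0` depending only
on `ε` such that: whenever `δ, M > 0`, `m ≥ 0` is an integer,
`H(s,k) = exp(−(m + s)|k|²) v₀(k)` with `|v₀(k)| ≤ δ|k|^{−α}` for `k ≠ 0`, and
`h` satisfies `|h(s,k)| ≤ M |k|^{−(2+2ε)} exp(−(m + s)|k|²/2)` for `s ∈ [0,1]`,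
`k ≠ 0`, then for all `t ∈ [0, 1]` and `k ≠ 0`,
`|B(H,h)(t,k)| ≤ D δ M exp(−(m + t)|k|²/3)(1 − exp(−t|k|²))/|k|`,
and the same bound holds for `|B(h,H)(t,k)|`. -/
theorem statement6 (ε : ℝ) (hε : 0 < 3 * ε) (hε1 : 3 * ε < 1)
    (α : ℝ) (hα : α = 2 + ε) :
    ∃ D : ℝ, 0 < D ∧
      ∀ (δ M : ℝ), 0 < δ → 0 < M → ∀ (m : ℕ) (v₀ : Z3 → C3) (H h : ℝ → Z3 → C3),
        (∀ k : Z3, k ≠ 0 → ‖v₀ k‖ ≤ δ * znorm k ^ (-α)) →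
        (∀ (s : ℝ) (k : Z3), H s k = Real.exp (-((m : ℝ) + s) * znorm k ^ 2) • v₀ k) →
        (∀ s ∈ Set.Icc (0 : ℝ) 1, ∀ k : Z3, k ≠ 0 →
          ‖h s k‖ ≤ M * znorm k ^ (-(2 + 2 * ε))
            * Real.exp (-((m : ℝ) + s) * znorm k ^ 2 / 2)) →
        ∀ t ∈ Set.Icc (0 : ℝ) 1, ∀ k : Z3, k ≠ 0 →
          ‖nsB H h t k‖ ≤ D * δ * M * Real.exp (-((m : ℝ) + t) * znorm k ^ 2 / 3)
              * (1 - Real.exp (-t * znorm k ^ 2)) / znorm k ∧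
          ‖nsB h H t k‖ ≤ D * δ * M * Real.exp (-((m : ℝ) + t) * znorm k ^ 2 / 3)
              * (1 - Real.exp (-t * znorm k ^ 2)) / znorm k := by
  have hεpos : 0 < ε := by linarith
  refine ⟨12 * π * (Cu + 1), by have := Cu_nonneg; positivity, ?_⟩
  intro δ M hδ hM m v₀ H h hv₀ hH hh t ht k hk
  -- bound on H
  have hHbound : ∀ (s : ℝ), 0 ≤ s → ∀ j : Z3, j ≠ 0 →
      ‖H s j‖ ≤ δ * (znorm j ^ 2)⁻¹ * Real.exp (-((m:ℝ)+s) * znorm j ^ 2) := by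
    intro s hs j hj
    rw [hH s j, norm_smul, Real.norm_eq_abs, abs_of_pos (Real.exp_pos _), mul_comm]
    apply mul_le_mul_of_nonneg_right _ (le_of_lt (Real.exp_pos _))
    calc ‖v₀ j‖ ≤ δ * znorm j ^ (-α) := hv₀ j hj
      _ ≤ δ * (znorm j ^ 2)⁻¹ := by
          apply mul_le_mul_of_nonneg_left _ (le_of_lt hδ)
          exact rpow_le_inv_sq (one_le_znorm hj) (by linarith [hα, hεpos])
  -- bound on h
  have hhbound : ∀ s ∈ Set.Icc (0:ℝ) 1, ∀ j : Z3, j ≠ 0 →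
      ‖h s j‖ ≤ M * (znorm j ^ 2)⁻¹ * Real.exp (-((m:ℝ)+s) * znorm j ^ 2 / 2) := by
    intro s hs j hj
    calc ‖h s j‖ ≤ M * znorm j ^ (-(2 + 2 * ε)) * Real.exp (-((m:ℝ)+s) * znorm j ^ 2 / 2) :=
          hh s hs j hj
      _ ≤ M * (znorm j ^ 2)⁻¹ * Real.exp (-((m:ℝ)+s) * znorm j ^ 2 / 2) := by
          apply mul_le_mul_of_nonneg_right _ (le_of_lt (Real.exp_pos _))
          apply mul_le_mul_of_nonneg_left _ (le_of_lt hM)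
          have : (-(2 + 2 * ε) : ℝ) = -(2 + 2*ε) := rfl
          exact rpow_le_inv_sq (one_le_znorm hj) (by linarith)
  have hrs : ∀ s : ℝ, 0 ≤ s → (0:ℝ) ≤ (m:ℝ) + s := fun s hs => by positivity
  constructor
  · -- B(H, h)
    have hfg : ∀ s ∈ Set.Icc (0:ℝ) 1, ∀ l : Z3, l ≠ 0 → l ≠ k →
        ‖H s (k - l)‖ * ‖h s l‖ ≤ (δ * M) * ((znorm (k-l))^2 * (znorm l)^2)⁻¹ *
          Real.exp (-((m:ℝ)+s) * znorm k^2 / 3) := by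
      intro s hs l hl0 hlk
      have hkl : k - l ≠ 0 := sub_ne_zero.mpr (Ne.symm hlk)
      have e1 := hHbound s hs.1 (k-l) hkl
      have e2 := hhbound s hs (l) hl0
      calc ‖H s (k - l)‖ * ‖h s l‖
          ≤ (δ * (znorm (k-l) ^ 2)⁻¹ * Real.exp (-((m:ℝ)+s) * znorm (k-l) ^ 2)) *
            (M * (znorm l ^ 2)⁻¹ * Real.exp (-((m:ℝ)+s) * znorm l ^ 2 / 2)) :=
            mul_le_mul e1 e2 (norm_nonneg _) (by positivity)
        _ = (δ * M) * ((znorm (k-l))^2 * (znorm l)^2)⁻¹ *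
            (Real.exp (-((m:ℝ)+s) * znorm (k-l) ^ 2) *
              Real.exp (-((m:ℝ)+s) * znorm l ^ 2 / 2)) := by
            rw [mul_inv]; ring
        _ ≤ (δ * M) * ((znorm (k-l))^2 * (znorm l)^2)⁻¹ *
            Real.exp (-((m:ℝ)+s) * znorm k^2 / 3) := by
            apply mul_le_mul_of_nonneg_left _ (by positivity)
            exact exp_quad1 (hrs s hs.1) (znorm_nonneg _) (znorm_nonneg _) (znorm_nonneg _)
              (znorm_triangle k l)
    have := nsB_bound (δ * M) (by positivity) m H h hk ht hfg
    calc ‖nsB H h t k‖ ≤ 12 * π * (Cu + 1) * (δ * M) * Real.exp (-((m:ℝ)+t)*znorm k^2/3) *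
        (1 - Real.exp (-t * znorm k^2)) / znorm k := this
      _ = 12 * π * (Cu + 1) * δ * M * Real.exp (-((m:ℝ)+t)*znorm k^2/3) *
        (1 - Real.exp (-t * znorm k^2)) / znorm k := by ring
  · -- B(h, H)
    have hfg : ∀ s ∈ Set.Icc (0:ℝ) 1, ∀ l : Z3, l ≠ 0 → l ≠ k →
        ‖h s (k - l)‖ * ‖H s l‖ ≤ (δ * M) * ((znorm (k-l))^2 * (znorm l)^2)⁻¹ *
          Real.exp (-((m:ℝ)+s) * znorm k^2 / 3) := by
      intro s hs l hl0 hlk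
      have hkl : k - l ≠ 0 := sub_ne_zero.mpr (Ne.symm hlk)
      have e1 := hhbound s hs (k-l) hkl
      have e2 := hHbound s hs.1 l hl0
      calc ‖h s (k - l)‖ * ‖H s l‖
          ≤ (M * (znorm (k-l) ^ 2)⁻¹ * Real.exp (-((m:ℝ)+s) * znorm (k-l) ^ 2 / 2)) *
            (δ * (znorm l ^ 2)⁻¹ * Real.exp (-((m:ℝ)+s) * znorm l ^ 2)) :=
            mul_le_mul e1 e2 (norm_nonneg _) (by positivity)
        _ = (δ * M) * ((znorm (k-l))^2 * (znorm l)^2)⁻¹ *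
            (Real.exp (-((m:ℝ)+s) * znorm (k-l) ^ 2 / 2) *
              Real.exp (-((m:ℝ)+s) * znorm l ^ 2)) := by
            rw [mul_inv]; ring
        _ ≤ (δ * M) * ((znorm (k-l))^2 * (znorm l)^2)⁻¹ *
            Real.exp (-((m:ℝ)+s) * znorm k^2 / 3) := by
            apply mul_le_mul_of_nonneg_left _ (by positivity)
            exact exp_quad2 (hrs s hs.1) (znorm_nonneg _) (znorm_nonneg _) (znorm_nonneg _)
              (znorm_triangle k l)
    have := nsB_bound (δ * M) (by positivity) m h H hk ht hfg
    calc ‖nsB h H t k‖ ≤ 12 * π * (Cu + 1) * (δ * M) * Real.exp (-((m:ℝ)+t)*znorm k^2/3) *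
        (1 - Real.exp (-t * znorm k^2)) / znorm k := this
      _ = 12 * π * (Cu + 1) * δ * M * Real.exp (-((m:ℝ)+t)*znorm k^2/3) *
        (1 - Real.exp (-t * znorm k^2)) / znorm k := by ring
end
end

section
/- Let β > 3, c > 0, M₁, M₂ > 0, and let m ≥ 0 be an integer. Suppose f₁, f₂ : [0, ∞) × (ℤ³ \ {0}) → ℂ³ satisfy |f_i(s, k)| ≤ M_i |k|^{−β} exp(−c√(m+1) |k|) for i = 1, 2, all s ∈ [0, 1], and all k ≠ 0. Then there exists a constant D > 0 depending only on β such that for all t ∈ [0, 1] and all k ∈ ℤ³ \ {0}: |B(f₁, f₂)(t, k)| ≤ D M₁ M₂ |k|^{−β} exp(−c√(m+1) |k|). -/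
noncomputable section

open Real MeasureTheory

lemma abs_coord_le (k : Z3) (i : Fin 3) : |(k i : ℝ)| ≤ znorm k := by
  have h := EuclideanSpace.norm_eq (toR3 k)
  rw [znorm, h]
  have h1 : |(k i : ℝ)| = Real.sqrt (‖toR3 k i‖ ^ 2) := by
    rw [Real.sqrt_sq_eq_abs]; simp [toR3]
  rw [h1]
  apply Real.sqrt_le_sqrt
  exact Finset.single_le_sum (f := fun j => ‖toR3 k j‖ ^ 2)
    (fun j _ => sq_nonneg _) (Finset.mem_univ i)

lemma summable_w {q : ℝ} (hq : 1 < q) :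
    Summable (fun n : ℤ => ((1:ℝ) + |(n:ℝ)|) ^ (-q)) := by
  have h1 : Summable (fun n : ℤ => |(n:ℝ)| ^ (-q)) := summable_abs_int_rpow hq
  have h2 : Summable (fun n : ℤ => if n = 0 then (1:ℝ) else 0) :=
    summable_of_ne_finset_zero (s := {0}) (by intro n hn; simp at hn; simp [hn])
  apply (h1.add h2).of_nonneg_of_le (fun n => by positivity)
  intro n
  by_cases hn : n = 0
  · simp [hn]; positivity
  · have hn' : (0:ℝ) < |(n:ℝ)| := by
      simp only [abs_pos, ne_eq, Int.cast_eq_zero]; exact hn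
    have : ((1:ℝ) + |(n:ℝ)|) ^ (-q) ≤ |(n:ℝ)| ^ (-q) :=
      Real.rpow_le_rpow_of_nonpos hn' (by linarith) (by linarith)
    simp only [hn, if_false, add_zero]
    exact this

def z3equiv : Z3 ≃ ℤ × ℤ × ℤ where
  toFun l := (l 0, l 1, l 2)
  invFun p := ![p.1, p.2.1, p.2.2]
  left_inv l := by funext i; fin_cases i <;> rfl
  right_inv p := rfl

set_option maxHeartbeats 1000000 in
lemma summable_H {β : ℝ} (hβ : 3 < β) :
    Summable (fun l : Z3 => if l = 0 then (0:ℝ) else znorm l ^ (-β)) := by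
  set q := β / 3 with hqdef
  have hq : 1 < q := by rw [hqdef]; linarith
  have hw := summable_w hq
  set w : ℤ → ℝ := fun n => ((1:ℝ) + |(n:ℝ)|) ^ (-q) with hwdef
  have hwnn : ∀ n, 0 ≤ w n := fun n => by positivity
  have hp2 : Summable (fun p : ℤ × ℤ => w p.1 * w p.2) :=
    hw.mul_of_nonneg hw hwnn hwnn
  have hp3 : Summable (fun p : ℤ × ℤ × ℤ => w p.1 * (w p.2.1 * w p.2.2)) :=
    hw.mul_of_nonneg hp2 hwnn (fun p => mul_nonneg (hwnn _) (hwnn _))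
  have hF : Summable (fun l : Z3 => w (l 0) * (w (l 1) * w (l 2))) :=
    (z3equiv.summable_iff.mpr hp3)
  apply (hF.mul_left ((2:ℝ) ^ β)).of_nonneg_of_le
  · intro l
    by_cases hl : l = 0
    · simp [hl]
    · simp only [hl, if_false]
      exact Real.rpow_nonneg (znorm_nonneg l) _
  · intro l
    by_cases hl : l = 0
    · simp only [hl, if_pos rfl]
      positivity
    · simp only [hl, if_false]
      have hz1 : (1:ℝ) ≤ znorm l := one_le_znorm hl
      have hz0 : (0:ℝ) < znorm l := znorm_pos hl
      have key : ∀ i : Fin 3, ((2:ℝ) * znorm l) ^ (-q) ≤ w (l i) := by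
        intro i
        apply Real.rpow_le_rpow_of_nonpos
        · positivity
        · have := abs_coord_le l i; linarith
        · linarith
      have hprod : ((2:ℝ) * znorm l) ^ (-q) * (((2:ℝ) * znorm l) ^ (-q) *
          ((2:ℝ) * znorm l) ^ (-q)) ≤ w (l 0) * (w (l 1) * w (l 2)) := by
        have k0 := key 0; have k1 := key 1; have k2 := key 2
        have hnn : (0:ℝ) ≤ ((2:ℝ) * znorm l) ^ (-q) := Real.rpow_nonneg (by linarith) _
        gcongr
      have heq : ((2:ℝ) * znorm l) ^ (-q) * (((2:ℝ) * znorm l) ^ (-q) *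
          ((2:ℝ) * znorm l) ^ (-q)) = ((2:ℝ) * znorm l) ^ (-(3*q)) := by
        rw [← Real.rpow_add (by linarith), ← Real.rpow_add (by linarith)]
        ring_nf
      have h3q : 3 * q = β := by rw [hqdef]; ring
      have heq2 : ((2:ℝ) * znorm l) ^ (-(3*q)) = 2 ^ (-β) * znorm l ^ (-β) := by
        rw [h3q, Real.mul_rpow (by norm_num) hz0.le]
      have hfin : 2 ^ (-β) * znorm l ^ (-β) ≤ w (l 0) * (w (l 1) * w (l 2)) := by
        rw [← heq2, ← heq]; exact hprod
      calc znorm l ^ (-β) = (2:ℝ)^β * (2 ^ (-β) * znorm l ^ (-β)) := by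
            rw [← mul_assoc, ← Real.rpow_add (by norm_num), add_neg_cancel,
              Real.rpow_zero, one_mul]
        _ ≤ (2:ℝ)^β * (w (l 0) * (w (l 1) * w (l 2))) := by
            apply mul_le_mul_of_nonneg_left hfin (by positivity)

/-- Translation equivalence `l ↦ k - l` on `ℤ³`. -/
def subE (k : Z3) : Z3 ≃ Z3 where
  toFun l := k - l
  invFun l := k - l
  left_inv l := by simp
  right_inv l := by simp

/-- Pointwise convolution estimate. -/
lemma conv_bound {β : ℝ} (hβ : 0 < β) {k l : Z3} (hk : k ≠ 0) (hl : l ≠ 0)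
    (hkl : k - l ≠ 0) :
    znorm (k - l) ^ (-β) * znorm l ^ (-β) ≤
      2 ^ β * znorm k ^ (-β) * (znorm l ^ (-β) + znorm (k - l) ^ (-β)) := by
  have hzk := znorm_pos hk
  have hzl := znorm_pos hl
  have hzkl := znorm_pos hkl
  have htri := znorm_triangle k l
  have hhalf : znorm k / 2 ≤ znorm (k - l) ∨ znorm k / 2 ≤ znorm l := by
    rcases le_total (znorm (k - l)) (znorm l) with h | h
    · right; linarith
    · left; linarith
  have hkey : ∀ x : ℝ, 0 < x → znorm k / 2 ≤ x →
      x ^ (-β) ≤ 2 ^ β * znorm k ^ (-β) := by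
    intro x hx hhx
    have h2 : x ^ (-β) ≤ (znorm k / 2) ^ (-β) :=
      Real.rpow_le_rpow_of_nonpos (by linarith) hhx (by linarith)
    have h3 : (znorm k / 2) ^ (-β) = 2 ^ β * znorm k ^ (-β) := by
      rw [Real.div_rpow hzk.le (by norm_num : (0:ℝ) ≤ 2),
        Real.rpow_neg (by norm_num : (0:ℝ) ≤ 2), div_eq_mul_inv, inv_inv, mul_comm]
    rw [h3] at h2
    exact h2
  rcases hhalf with h | h
  · have := hkey _ hzkl h
    calc znorm (k - l) ^ (-β) * znorm l ^ (-β)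
        ≤ (2 ^ β * znorm k ^ (-β)) * znorm l ^ (-β) := by
          apply mul_le_mul_of_nonneg_right this (Real.rpow_nonneg hzl.le _)
      _ ≤ 2 ^ β * znorm k ^ (-β) * (znorm l ^ (-β) + znorm (k - l) ^ (-β)) := by
          have h1 : (0:ℝ) ≤ 2 ^ β * znorm k ^ (-β) := by
            apply mul_nonneg (by positivity) (Real.rpow_nonneg hzk.le _)
          have h2 : (0:ℝ) ≤ znorm (k - l) ^ (-β) := Real.rpow_nonneg hzkl.le _
          nlinarith [mul_nonneg h1 h2]
  · have := hkey _ hzl h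
    calc znorm (k - l) ^ (-β) * znorm l ^ (-β)
        ≤ znorm (k - l) ^ (-β) * (2 ^ β * znorm k ^ (-β)) := by
          apply mul_le_mul_of_nonneg_left this (Real.rpow_nonneg hzkl.le _)
      _ ≤ 2 ^ β * znorm k ^ (-β) * (znorm l ^ (-β) + znorm (k - l) ^ (-β)) := by
          have h1 : (0:ℝ) ≤ 2 ^ β * znorm k ^ (-β) := by
            apply mul_nonneg (by positivity) (Real.rpow_nonneg hzk.le _)
          have h2 : (0:ℝ) ≤ znorm (k - l) ^ (-β) := Real.rpow_nonneg hzkl.le _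
          have h3 : (0:ℝ) ≤ znorm l ^ (-β) := Real.rpow_nonneg hzl.le _
          nlinarith [mul_nonneg h1 h3]

set_option maxHeartbeats 2000000 in
/-- Let `β > 3`, `c > 0`.  There is a constant `D > 0` depending only on `β`
such that: whenever `M₁, M₂ > 0`, `m ≥ 0` is an integer and `f₁, f₂` satisfy
`|fᵢ(s,k)| ≤ Mᵢ |k|^{−β} exp(−c√(m+1)|k|)` for `i = 1, 2`, `s ∈ [0,1]` and
`k ≠ 0`, then for all `t ∈ [0, 1]` and `k ≠ 0`,
`|B(f₁,f₂)(t,k)| ≤ D M₁ M₂ |k|^{−β} exp(−c√(m+1)|k|)`.  (This says that under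
`B` the spaces `F_{m+1}(c)` behave like a normed algebra.) -/
theorem statement12 (β : ℝ) (hβ : 3 < β) (c : ℝ) (hc : 0 < c) :
    ∃ D : ℝ, 0 < D ∧
      ∀ (M₁ M₂ : ℝ), 0 < M₁ → 0 < M₂ → ∀ (m : ℕ) (f₁ f₂ : ℝ → Z3 → C3),
        (∀ s ∈ Set.Icc (0 : ℝ) 1, ∀ k : Z3, k ≠ 0 →
          ‖f₁ s k‖ ≤ M₁ * znorm k ^ (-β)
            * Real.exp (-c * Real.sqrt ((m : ℝ) + 1) * znorm k)) →
        (∀ s ∈ Set.Icc (0 : ℝ) 1, ∀ k : Z3, k ≠ 0 →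
          ‖f₂ s k‖ ≤ M₂ * znorm k ^ (-β)
            * Real.exp (-c * Real.sqrt ((m : ℝ) + 1) * znorm k)) →
        ∀ t ∈ Set.Icc (0 : ℝ) 1, ∀ k : Z3, k ≠ 0 →
          ‖nsB f₁ f₂ t k‖ ≤ D * M₁ * M₂ * znorm k ^ (-β)
            * Real.exp (-c * Real.sqrt ((m : ℝ) + 1) * znorm k) := by
  have hH := summable_H hβ
  set H : Z3 → ℝ := fun l => if l = 0 then (0:ℝ) else znorm l ^ (-β) with hHdef
  clear_value H
  have hHnn : ∀ l, 0 ≤ H l := by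
    intro l; by_cases hl : l = 0
    · simp [hHdef, hl]
    · simp only [hHdef, hl, if_false]; exact Real.rpow_nonneg (znorm_nonneg l) _
  set A : ℝ := ∑' l, H l with hAdef
  clear_value A
  have hA0 : 0 ≤ A := by rw [hAdef]; exact tsum_nonneg hHnn
  have h2β : (0:ℝ) < 2 ^ β := by positivity
  refine ⟨2 * π * (8 * 2 ^ β * A) + 1, ?_, ?_⟩
  · have : (0:ℝ) ≤ 2 * π * (8 * 2 ^ β * A) := by
      apply mul_nonneg (by positivity)
      apply mul_nonneg (by positivity) hA0
    linarith
  intro M₁ M₂ hM₁ hM₂ m f₁ f₂ hf₁ hf₂ t ht k hk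
  set D : ℝ := 2 * π * (8 * 2 ^ β * A) + 1 with hDdef
  clear_value D
  have hzk := znorm_pos hk
  have hzk1 := one_le_znorm hk
  set cm : ℝ := c * Real.sqrt ((m : ℝ) + 1) with hcmdef
  clear_value cm
  have hcm : 0 < cm := by
    rw [hcmdef]
    apply mul_pos hc
    apply Real.sqrt_pos.mpr
    positivity
  set E : Z3 → ℝ := fun j => Real.exp (-c * Real.sqrt ((m : ℝ) + 1) * znorm j) with hEdef
  clear_value E
  have hEpos : ∀ j, 0 < E j := by rw [hEdef]; exact fun j => Real.exp_pos _
  have hEmul : ∀ l : Z3, E (k - l) * E l ≤ E k := by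
    intro l
    rw [hEdef, ← Real.exp_add]
    simp only []
    apply Real.exp_le_exp.mpr
    have htri := znorm_triangle k l
    have : -c * Real.sqrt ((m:ℝ)+1) = -cm := by rw [hcmdef]; ring
    rw [this]
    nlinarith [htri]
  -- the constant in front of the convolution sum
  set Cst : ℝ := 2 * znorm k * M₁ * M₂ * E k * (2 ^ β * znorm k ^ (-β)) with hCstdef
  clear_value Cst
  have hznb : (0:ℝ) ≤ znorm k ^ (-β) := Real.rpow_nonneg hzk.le _
  have hCst0 : 0 ≤ Cst := by
    rw [hCstdef]
    apply mul_nonneg _ (mul_nonneg h2β.le hznb)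
    apply mul_nonneg _ (hEpos k).le
    apply mul_nonneg _ hM₂.le
    apply mul_nonneg _ hM₁.le
    linarith
  set G : Z3 → ℝ := fun l => Cst * (H l + H (k - l)) with hGdef
  clear_value G
  have hHk : Summable (fun l : Z3 => H (k - l)) := (subE k).summable_iff.mpr hH
  have hG : Summable G := by rw [hGdef]; exact ((hH.add hHk).mul_left Cst)
  have htrans : ∑' l : Z3, H (k - l) = ∑' l, H l := (subE k).tsum_eq H
  have htsumG : ∑' l, G l = Cst * (A + A) := by
    simp only [hGdef]
    rw [tsum_mul_left, Summable.tsum_add hH hHk, htrans, ← hAdef]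
  -- pointwise bound on the summand, for s ∈ [0,1]
  have hterm : ∀ s ∈ Set.Icc (0:ℝ) 1, ∀ l : Z3,
      ‖(if l ≠ 0 ∧ l ≠ k then cdot (toC3 k) (f₁ s (k - l)) • leray k (f₂ s l)
        else (0 : C3))‖ ≤ G l := by
    intro s hs l
    by_cases hl : l ≠ 0 ∧ l ≠ k
    · obtain ⟨hl0, hlk⟩ := hl
      have hkl0 : k - l ≠ 0 := sub_ne_zero.mpr (Ne.symm hlk)
      rw [if_pos ⟨hl0, hlk⟩, norm_smul]
      have h1 : ‖cdot (toC3 k) (f₁ s (k - l))‖ ≤ znorm k * ‖f₁ s (k - l)‖ :=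
        norm_cdot_le _ _
      have h2 : ‖leray k (f₂ s l)‖ ≤ 2 * ‖f₂ s l‖ := norm_leray_le hk _
      have hb1 := hf₁ s hs (k - l) hkl0
      have hb2 := hf₂ s hs l hl0
      have hE1 : Real.exp (-c * Real.sqrt ((m:ℝ)+1) * znorm (k-l)) = E (k-l) := by
        rw [hEdef]
      have hE2 : Real.exp (-c * Real.sqrt ((m:ℝ)+1) * znorm l) = E l := by
        rw [hEdef]
      rw [hE1] at hb1; rw [hE2] at hb2
      have hnn1 : (0:ℝ) ≤ ‖cdot (toC3 k) (f₁ s (k - l))‖ := norm_nonneg _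
      calc ‖cdot (toC3 k) (f₁ s (k - l))‖ * ‖leray k (f₂ s l)‖
          ≤ (znorm k * (M₁ * znorm (k-l) ^ (-β) * E (k-l))) *
            (2 * (M₂ * znorm l ^ (-β) * E l)) := by
            apply mul_le_mul
            · exact le_trans h1 (by
                apply mul_le_mul_of_nonneg_left hb1 hzk.le)
            · exact le_trans h2 (by
                apply mul_le_mul_of_nonneg_left hb2 (by norm_num))
            · exact norm_nonneg _
            · apply mul_nonneg hzk.le
              apply mul_nonneg (mul_nonneg hM₁.le (Real.rpow_nonneg (znorm_nonneg _) _))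
                (hEpos _).le
        _ = (2 * znorm k * M₁ * M₂) * (znorm (k-l) ^ (-β) * znorm l ^ (-β)) *
              (E (k-l) * E l) := by ring
        _ ≤ (2 * znorm k * M₁ * M₂) * (2 ^ β * znorm k ^ (-β) * (znorm l ^ (-β)
              + znorm (k-l) ^ (-β))) * E k := by
            have hc1 := conv_bound (by linarith : (0:ℝ) < β) hk hl0 hkl0
            have hc2 := hEmul l
            have hnn : (0:ℝ) ≤ 2 * znorm k * M₁ * M₂ := by
              apply mul_nonneg (mul_nonneg (by linarith) hM₁.le) hM₂.le
            have hnnconv : (0:ℝ) ≤ znorm (k-l) ^ (-β) * znorm l ^ (-β) :=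
              mul_nonneg (Real.rpow_nonneg (znorm_nonneg _) _)
                (Real.rpow_nonneg (znorm_nonneg _) _)
            have hnnE : (0:ℝ) ≤ E (k-l) * E l := mul_nonneg (hEpos _).le (hEpos _).le
            have hnn2 : (0:ℝ) ≤ 2 ^ β * znorm k ^ (-β) * (znorm l ^ (-β)
                + znorm (k-l) ^ (-β)) := le_trans hnnconv hc1
            calc (2 * znorm k * M₁ * M₂) * (znorm (k-l) ^ (-β) * znorm l ^ (-β)) *
                  (E (k-l) * E l)
                ≤ (2 * znorm k * M₁ * M₂) * (2 ^ β * znorm k ^ (-β) * (znorm l ^ (-β)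
                    + znorm (k-l) ^ (-β))) * (E (k-l) * E l) := by
                  apply mul_le_mul_of_nonneg_right _ hnnE
                  exact mul_le_mul_of_nonneg_left hc1 hnn
              _ ≤ _ := by
                  apply mul_le_mul_of_nonneg_left hc2
                  exact mul_nonneg hnn hnn2
        _ = G l := by
            rw [hGdef, hCstdef, hHdef]
            simp only [if_neg hl0, if_neg hkl0]
            ring
    · rw [if_neg hl, norm_zero, hGdef]
      exact mul_nonneg hCst0 (add_nonneg (hHnn _) (hHnn _))
  -- bound on the tsum
  have htsum : ∀ s ∈ Set.Icc (0:ℝ) 1,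
      ‖∑' l : Z3, (if l ≠ 0 ∧ l ≠ k then cdot (toC3 k) (f₁ s (k - l)) • leray k (f₂ s l)
        else (0 : C3))‖ ≤ Cst * (A + A) := by
    intro s hs
    have hTs : Summable (fun l : Z3 => ‖(if l ≠ 0 ∧ l ≠ k then
        cdot (toC3 k) (f₁ s (k - l)) • leray k (f₂ s l) else (0 : C3))‖) :=
      hG.of_nonneg_of_le (fun _ => norm_nonneg _) (hterm s hs)
    refine le_trans (norm_tsum_le_tsum_norm hTs) (le_trans (Summable.tsum_le_tsum (hterm s hs) hTs hG) (le_of_eq htsumG))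
  -- the time integral
  obtain ⟨ht0, ht1⟩ := ht
  set a : ℝ := znorm k ^ 2 with hadef
  have ha1 : 1 ≤ a := by rw [hadef]; nlinarith
  have ha0 : 0 < a := by linarith
  set K : ℝ := Cst * (A + A) with hKdef
  have hK0 : 0 ≤ K := mul_nonneg hCst0 (by linarith)
  have hIbound : ‖∫ s in (0:ℝ)..t, Real.exp (-(t - s) * a) •
      (∑' l : Z3, if l ≠ 0 ∧ l ≠ k then cdot (toC3 k) (f₁ s (k - l)) • leray k (f₂ s l)
        else (0 : C3))‖ ≤ K / a := by
    have hgle : ∀ s ∈ Set.uIoc (0:ℝ) t, ‖Real.exp (-(t - s) * a) •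
        (∑' l : Z3, if l ≠ 0 ∧ l ≠ k then cdot (toC3 k) (f₁ s (k - l)) • leray k (f₂ s l)
          else (0 : C3))‖ ≤ Real.exp (-(t - s) * a) * K := by
      intro s hs
      rw [Set.uIoc_of_le ht0] at hs
      have hs' : s ∈ Set.Icc (0:ℝ) 1 := ⟨hs.1.le, le_trans hs.2 ht1⟩
      rw [norm_smul, Real.norm_of_nonneg (Real.exp_nonneg _)]
      exact mul_le_mul_of_nonneg_left (htsum s hs') (Real.exp_nonneg _)
    have hbint : IntervalIntegrable (fun s => Real.exp (-(t - s) * a) * K)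
        volume 0 t := by
      apply Continuous.intervalIntegrable
      fun_prop
    have h1 := intervalIntegral.norm_integral_le_abs_of_norm_le
      (f := fun s => Real.exp (-(t - s) * a) •
        (∑' l : Z3, if l ≠ 0 ∧ l ≠ k then cdot (toC3 k) (f₁ s (k - l)) • leray k (f₂ s l)
          else (0 : C3)))
      (g := fun s => Real.exp (-(t - s) * a) * K)
      ((ae_restrict_mem measurableSet_uIoc).mono hgle) hbint
    -- compute the bounding integral
    have hval : ∫ s in (0:ℝ)..t, Real.exp (-(t - s) * a) * K
        = ((1 - Real.exp (-(t * a))) / a) * K := by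
      have hF : ∀ x ∈ Set.uIcc (0:ℝ) t,
          HasDerivAt (fun s => Real.exp (a * s - a * t) / a) (Real.exp (-(t - x) * a)) x := by
        intro x _
        have h1 : HasDerivAt (fun s : ℝ => a * s - a * t) a x := by
          simpa using ((hasDerivAt_id x).const_mul a).sub_const (a * t)
        have h2 := h1.exp
        have h3 := h2.div_const a
        rw [mul_div_assoc, div_self ha0.ne', mul_one] at h3
        exact h3.congr_deriv (by congr 1; ring)
      have hceq : IntervalIntegrable (fun s => Real.exp (-(t - s) * a)) volume 0 t := by
        apply Continuous.intervalIntegrable; fun_prop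
      rw [intervalIntegral.integral_mul_const,
        intervalIntegral.integral_eq_sub_of_hasDerivAt hF hceq]
      rw [mul_comm a t]
      field_simp
      try ring_nf
      rw [Real.exp_zero]
      ring
    rw [hval] at h1
    apply le_trans h1
    rw [abs_mul, abs_div]
    have he1 : Real.exp (-(t * a)) ≤ 1 := by
      apply Real.exp_le_one_iff.mpr
      nlinarith
    have he0 : 0 < Real.exp (-(t * a)) := Real.exp_pos _
    rw [abs_of_nonneg (by linarith : (0:ℝ) ≤ 1 - Real.exp (-(t * a))),
      abs_of_pos ha0, abs_of_nonneg hK0]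
    rw [div_mul_eq_mul_div, div_le_div_iff₀ ha0 ha0]
    nlinarith [mul_nonneg (mul_nonneg he0.le hK0) ha0.le]
  -- assemble
  have hnsB : ‖nsB f₁ f₂ t k‖ ≤ 2 * π * (K / a) := by
    rw [nsB, norm_smul]
    have h2pi : ‖(2 * (π:ℂ) * Complex.I)‖ = 2 * π := by
      simp [norm_mul, Complex.norm_real, abs_of_nonneg Real.pi_nonneg]
    rw [h2pi]
    apply mul_le_mul_of_nonneg_left hIbound (by positivity)
  apply le_trans hnsB
  -- final algebra: 2π * K / a ≤ D * M₁ * M₂ * znorm k ^ (-β) * E k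
  have hEk : Real.exp (-c * Real.sqrt ((m:ℝ)+1) * znorm k) = E k := by rw [hEdef]
  rw [hEk]
  have hP0 : (0:ℝ) ≤ M₁ * M₂ * znorm k ^ (-β) * E k := by
    apply mul_nonneg (mul_nonneg (mul_nonneg hM₁.le hM₂.le) hznb) (hEpos k).le
  have hfrac : znorm k / a ≤ 1 := by
    rw [hadef, div_le_one (by nlinarith)]
    nlinarith
  have hKa : K / a = (2 * 2 ^ β * (A + A)) * (M₁ * M₂ * znorm k ^ (-β) * E k)
      * (znorm k / a) := by
    rw [hKdef, hCstdef]
    field_simp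
  rw [hKa]
  have hstep : 2 * π * ((2 * 2 ^ β * (A + A)) * (M₁ * M₂ * znorm k ^ (-β) * E k)
      * (znorm k / a)) ≤ 2 * π * ((2 * 2 ^ β * (A + A)) *
        (M₁ * M₂ * znorm k ^ (-β) * E k)) := by
    have hnn : (0:ℝ) ≤ 2 * π * ((2 * 2 ^ β * (A + A)) *
        (M₁ * M₂ * znorm k ^ (-β) * E k)) := by
      apply mul_nonneg (by positivity)
      apply mul_nonneg _ hP0
      apply mul_nonneg (by positivity) (by linarith)
    calc 2 * π * ((2 * 2 ^ β * (A + A)) * (M₁ * M₂ * znorm k ^ (-β) * E k)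
        * (znorm k / a)) = (2 * π * ((2 * 2 ^ β * (A + A)) *
          (M₁ * M₂ * znorm k ^ (-β) * E k))) * (znorm k / a) := by ring
      _ ≤ (2 * π * ((2 * 2 ^ β * (A + A)) *
          (M₁ * M₂ * znorm k ^ (-β) * E k))) * 1 :=
          mul_le_mul_of_nonneg_left hfrac hnn
      _ = _ := by ring
  apply le_trans hstep
  have hfinal : 2 * π * ((2 * 2 ^ β * (A + A)) * (M₁ * M₂ * znorm k ^ (-β) * E k))
      ≤ D * M₁ * M₂ * znorm k ^ (-β) * E k := by
    have h1 : 2 * π * (2 * 2 ^ β * (A + A)) ≤ D := by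
      rw [hDdef]
      have : 2 * π * (2 * 2 ^ β * (A + A)) = 2 * π * (4 * 2 ^ β * A) := by ring
      rw [this]
      have h2 : 2 * π * (4 * 2 ^ β * A) ≤ 2 * π * (8 * 2 ^ β * A) := by
        apply mul_le_mul_of_nonneg_left _ (by positivity)
        nlinarith
      linarith
    calc 2 * π * ((2 * 2 ^ β * (A + A)) * (M₁ * M₂ * znorm k ^ (-β) * E k))
        = (2 * π * (2 * 2 ^ β * (A + A))) * (M₁ * M₂ * znorm k ^ (-β) * E k) := by ring
      _ ≤ D * (M₁ * M₂ * znorm k ^ (-β) * E k) := mul_le_mul_of_nonneg_right h1 hP0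
      _ = D * M₁ * M₂ * znorm k ^ (-β) * E k := by ring
  exact hfinal
end
end
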